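/- arXiv:math/0008208 — 8 statements merged into one kernel-verified Lean document; each statement's English description precedes it below -/
import Mathlib

section
/- Let τ ≥ s₀ be a real random variable whose distribution function F_τ(s) = P(τ < s) satisfies F_τ(s) ≥ G(s) for a continuously differentiable function G with G(s₀) ≤ 0. Let g : ℝ → [0,1] be continuously differentiable and increasing on (s₀, s₁) and equal to 1 on [s₁, ∞). Then for all t > s₀: E[1_{[s₀,t)}(τ) g(τ)] ≤ g(t)(F_τ(t) − G(t)) + ∫_{s₀}^t g(s) G'(s) ds. -/
open MeasureTheory Set

/-- Lemma A.2: integration-by-parts estimate for `E[1_{[s₀,t)}(τ) g(τ)]`. -/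
theorem stmt1
    {Ω : Type*} [MeasurableSpace Ω] (μ : Measure Ω) [IsProbabilityMeasure μ]
    (τ : Ω → ℝ) (hτmeas : Measurable τ)
    (s₀ s₁ t : ℝ) (hs₀₁ : s₀ < s₁) (ht : s₀ < t)
    (hτ : ∀ ω, s₀ ≤ τ ω)
    (G : ℝ → ℝ) (hG : ContDiff ℝ 1 G) (hGs₀ : G s₀ ≤ 0)
    (hFG : ∀ s, G s ≤ (μ {ω | τ ω < s}).toReal)
    (g : ℝ → ℝ) (hgcont : Continuous g)
    (hg0 : ∀ s, 0 ≤ g s) (hg1' : ∀ s, g s ≤ 1)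
    (hgdiff : ∀ s ∈ Set.Ioo s₀ s₁, DifferentiableAt ℝ g s)
    (hgmono : MonotoneOn g (Set.Ioo s₀ s₁))
    (hg1 : ∀ s, s₁ ≤ s → g s = 1) :
    ∫ ω, (Set.Ico s₀ t).indicator (fun _ => (1:ℝ)) (τ ω) * g (τ ω) ∂μ
      ≤ g t * ((μ {ω | τ ω < t}).toReal - G t)
        + ∫ s in s₀..t, g s * deriv G s := by
  classical
  set F : ℝ → ℝ := fun s => (μ {ω | τ ω < s}).toReal with hFdef
  set g₁ : ℝ → ℝ := fun s => if s < s₁ then deriv g s else 0 with hg₁def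
  -- derivative facts
  have hgd : ∀ x, s₀ < x → x < s₁ → HasDerivAt g (g₁ x) x := by
    intro x hx1 hx2
    have h := (hgdiff x ⟨hx1, hx2⟩).hasDerivAt
    simpa [hg₁def, if_pos hx2] using h
  have hgR : ∀ x, s₀ < x → HasDerivWithinAt g (g₁ x) (Ioi x) x := by
    intro x hx
    by_cases h : x < s₁
    · exact (hgd x hx h).hasDerivWithinAt
    · push_neg at h
      have h0 : g₁ x = 0 := by simp [hg₁def, not_lt.2 h]
      rw [h0]
      exact (hasDerivWithinAt_const x (Ioi x) (1:ℝ)).congr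
        (fun y hy => hg1 y (h.trans (le_of_lt hy))) (hg1 x h)
  have hg₁nn : ∀ x, s₀ < x → 0 ≤ g₁ x := by
    intro x hx
    by_cases h : x < s₁
    · have hd := hgd x hx h
      rw [hasDerivAt_iff_tendsto_slope] at hd
      have hd' : Filter.Tendsto (slope g x) (nhdsWithin x (Ioi x)) (nhds (g₁ x)) :=
        hd.mono_left (nhdsWithin_mono x fun y hy => ne_of_gt hy)
      refine ge_of_tendsto hd' ?_
      filter_upwards [Ioo_mem_nhdsGT_of_mem ⟨le_refl x, h⟩] with y hy
      rw [slope_def_field]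
      exact div_nonneg
        (sub_nonneg.2 (hgmono ⟨hx, h⟩ ⟨hx.trans hy.1, hy.2⟩ hy.1.le))
        (sub_nonneg.2 hy.1.le)
    · simp [hg₁def, h]
  -- integrability of g₁ on [s₀, t]
  have hg₁int : IntervalIntegrable g₁ volume s₀ t := by
    set t' : ℝ := min t s₁ with ht'def
    have hs₀t' : s₀ < t' := lt_min ht hs₀₁
    have h1 : IntervalIntegrable g₁ volume s₀ t' := by
      apply intervalIntegral.intervalIntegrable_deriv_of_nonneg (g := g)
        hgcont.continuousOn
      · intro x hx
        rw [min_eq_left hs₀t'.le, max_eq_right hs₀t'.le] at hx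
        exact hgd x hx.1 (lt_of_lt_of_le hx.2 (min_le_right t s₁))
      · intro x hx
        rw [min_eq_left hs₀t'.le, max_eq_right hs₀t'.le] at hx
        exact hg₁nn x hx.1
    have h2 : IntervalIntegrable g₁ volume t' t := by
      rcases le_or_gt t s₁ with h | h
      · rw [ht'def, min_eq_left h]
      · rw [ht'def, min_eq_right h.le]
        have hzero : EqOn g₁ (fun _ => (0:ℝ)) (Ioc s₁ t) := fun s hs => by
          simp [hg₁def, not_lt.2 hs.1.le]
        refine ⟨(integrableOn_congr_fun hzero measurableSet_Ioc).2
          (integrableOn_const measure_Ioc_lt_top.ne), ?_⟩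
        rw [Ioc_eq_empty (not_lt.2 h.le)]
        exact integrableOn_empty
    exact h1.trans h2
  -- FTC for g
  have hftc : ∀ b, s₀ ≤ b → b ≤ t → ∫ s in s₀..b, g₁ s = g b - g s₀ := by
    intro b hb1 hb2
    apply intervalIntegral.integral_eq_sub_of_hasDeriv_right_of_le hb1
      hgcont.continuousOn (fun x hx => hgR x hx.1)
    refine hg₁int.mono_set ?_
    rw [uIcc_of_le hb1, uIcc_of_le (hb1.trans hb2)]
    exact Icc_subset_Icc le_rfl hb2
  -- integration by parts
  have hGderivcont : Continuous (deriv G) := hG.continuous_deriv le_rfl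
  have hgG₁int : IntervalIntegrable (fun s => g₁ s * G s) volume s₀ t :=
    hg₁int.mul_continuousOn hG.continuous.continuousOn
  have hgG'int : IntervalIntegrable (fun s => g s * deriv G s) volume s₀ t :=
    (hgcont.mul hGderivcont).intervalIntegrable s₀ t
  have hibp : (∫ s in s₀..t, g₁ s * G s) + (∫ s in s₀..t, g s * deriv G s)
      = g t * G t - g s₀ * G s₀ := by
    rw [← intervalIntegral.integral_add hgG₁int hgG'int]
    apply intervalIntegral.integral_eq_sub_of_hasDeriv_right_of_le ht.le
      (hgcont.mul hG.continuous).continuousOn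
    · intro x hx
      exact (hgR x hx.1).mul
        ((hG.differentiable one_ne_zero x).hasDerivAt.hasDerivWithinAt)
    · exact hgG₁int.add hgG'int
  -- product function for Fubini
  have hA : MeasurableSet {ω | τ ω < t} := hτmeas measurableSet_Iio
  set A : Set Ω := {ω | τ ω < t} with hAdef
  set S : Set (Ω × ℝ) := {p | s₀ < p.2 ∧ p.2 ≤ τ p.1 ∧ τ p.1 < t} with hSdef
  have hg₁meas : Measurable g₁ :=
    Measurable.ite (measurableSet_lt measurable_id measurable_const)
      (measurable_deriv g) measurable_const
  have hSmeas : MeasurableSet S := by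
    have h1 : MeasurableSet {p : Ω × ℝ | s₀ < p.2} :=
      measurableSet_lt measurable_const measurable_snd
    have h2 : MeasurableSet {p : Ω × ℝ | p.2 ≤ τ p.1} :=
      measurableSet_le measurable_snd (hτmeas.comp measurable_fst)
    have h3 : MeasurableSet {p : Ω × ℝ | τ p.1 < t} :=
      measurableSet_lt (hτmeas.comp measurable_fst) measurable_const
    exact h1.inter (h2.inter h3)
  set f : Ω × ℝ → ℝ := S.indicator (fun p => g₁ p.2) with hfdef
  have hfmeas : AEStronglyMeasurable f (μ.prod volume) :=
    ((hg₁meas.comp measurable_snd).indicator hSmeas).aestronglyMeasurable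
  have hg₁Ioo : IntegrableOn g₁ (Ioo s₀ t) volume :=
    hg₁int.1.mono_set Ioo_subset_Ioc_self
  have hφint : Integrable ((Ioo s₀ t).indicator (fun s => |g₁ s|)) volume :=
    IntegrableOn.integrable_indicator (s := Ioo s₀ t) hg₁Ioo.abs measurableSet_Ioo
  have hφprod : Integrable
      (fun p : Ω × ℝ => (Ioo s₀ t).indicator (fun s => |g₁ s|) p.2) (μ.prod volume) := by
    have h := (integrable_const (μ := μ) (1:ℝ)).mul_prod hφint
    simpa using h
  have hfint : Integrable f (μ.prod volume) := by
    refine hφprod.mono hfmeas (Filter.Eventually.of_forall fun p => ?_)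
    by_cases hp : p ∈ S
    · have hm : p.2 ∈ Ioo s₀ t := ⟨hp.1, lt_of_le_of_lt hp.2.1 hp.2.2⟩
      rw [hfdef, Set.indicator_of_mem hp, Set.indicator_of_mem hm]
      simp [Real.norm_eq_abs, abs_abs, le_refl]
    · rw [hfdef, Set.indicator_of_notMem hp]
      simp [norm_nonneg]
  have hswap : (∫ ω, (∫ s, f (ω, s)) ∂μ) = ∫ s, (∫ ω, f (ω, s) ∂μ) :=
    MeasureTheory.integral_integral_swap (f := fun ω s => f (ω, s)) hfint
  -- inner integral
  have hinner : ∀ ω, (∫ s, f (ω, s)) = A.indicator (fun ω => g (τ ω) - g s₀) ω := by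
    intro ω
    by_cases hω : τ ω < t
    · have hfun : (fun s => f (ω, s)) = (Ioc s₀ (τ ω)).indicator g₁ := by
        funext s
        by_cases hs : s ∈ Ioc s₀ (τ ω)
        · rw [Set.indicator_of_mem hs]
          exact Set.indicator_of_mem (show (ω, s) ∈ S from ⟨hs.1, hs.2, hω⟩) _
        · rw [Set.indicator_of_notMem hs]
          exact Set.indicator_of_notMem (fun hmem => hs ⟨hmem.1, hmem.2.1⟩) _
      rw [hfun, integral_indicator measurableSet_Ioc,
        ← intervalIntegral.integral_of_le (hτ ω), hftc (τ ω) (hτ ω) hω.le,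
        Set.indicator_of_mem (show ω ∈ A from hω)]
    · have hfun : (fun s => f (ω, s)) = fun _ => (0:ℝ) := by
        funext s
        exact Set.indicator_of_notMem
          (show (ω, s) ∉ S from fun hmem => hω hmem.2.2) _
      rw [hfun, integral_zero, Set.indicator_of_notMem (show ω ∉ A from hω)]
  -- outer integral
  have houter : ∀ s, (∫ ω, f (ω, s) ∂μ)
      = (Ioo s₀ t).indicator
          (fun s => g₁ s * (μ {ω | s ≤ τ ω ∧ τ ω < t}).toReal) s := by
    intro s
    by_cases hs : s ∈ Ioo s₀ t
    · have hfun : (fun ω => f (ω, s))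
          = {ω | s ≤ τ ω ∧ τ ω < t}.indicator (fun _ => g₁ s) := by
        funext ω
        by_cases hm : ω ∈ {ω | s ≤ τ ω ∧ τ ω < t}
        · rw [Set.indicator_of_mem hm]
          exact Set.indicator_of_mem (show (ω, s) ∈ S from ⟨hs.1, hm.1, hm.2⟩) _
        · rw [Set.indicator_of_notMem hm]
          exact Set.indicator_of_notMem
            (show (ω, s) ∉ S from fun hmem => hm ⟨hmem.2.1, hmem.2.2⟩) _
      rw [hfun, integral_indicator_const _
        (show MeasurableSet {ω | s ≤ τ ω ∧ τ ω < t} from hτmeas measurableSet_Ico),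
        Set.indicator_of_mem hs, smul_eq_mul, mul_comm, measureReal_def]
    · have hfun : (fun ω => f (ω, s)) = fun _ => (0:ℝ) := by
        funext ω
        refine Set.indicator_of_notMem (show (ω, s) ∉ S from ?_) _
        rintro ⟨h1, h2, h3⟩
        exact hs ⟨h1, lt_of_le_of_lt h2 h3⟩
      rw [hfun, integral_zero, Set.indicator_of_notMem hs]
  -- rewriting the LHS
  have hLHSfun : ∀ ω, (Set.Ico s₀ t).indicator (fun _ => (1:ℝ)) (τ ω) * g (τ ω)
      = A.indicator (fun ω => g (τ ω)) ω := by
    intro ω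
    by_cases hω : τ ω < t
    · rw [Set.indicator_of_mem (show τ ω ∈ Set.Ico s₀ t from ⟨hτ ω, hω⟩),
        Set.indicator_of_mem (show ω ∈ A from hω), one_mul]
    · rw [Set.indicator_of_notMem
        (show τ ω ∉ Set.Ico s₀ t from fun hm => hω hm.2),
        Set.indicator_of_notMem (show ω ∉ A from hω), zero_mul]
  have hgτmeas : AEStronglyMeasurable (A.indicator fun ω => g (τ ω)) μ :=
    ((hgcont.measurable.comp hτmeas).indicator hA).aestronglyMeasurable
  have hint1 : Integrable (A.indicator fun ω => g (τ ω)) μ := by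
    refine (integrable_const (1:ℝ)).mono' hgτmeas (Filter.Eventually.of_forall fun ω => ?_)
    by_cases hω : ω ∈ A
    · rw [Set.indicator_of_mem hω]
      rw [Real.norm_eq_abs, abs_of_nonneg (hg0 _)]
      exact hg1' _
    · rw [Set.indicator_of_notMem hω]
      simp
  have hint2 : Integrable (A.indicator fun _ => g s₀) μ :=
    (integrable_const (g s₀)).indicator hA
  have hindsub : ∀ ω, A.indicator (fun ω => g (τ ω) - g s₀) ω
      = A.indicator (fun ω => g (τ ω)) ω - A.indicator (fun _ => g s₀) ω := by
    intro ω
    by_cases hω : ω ∈ A <;>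
      simp [Set.indicator_of_mem, Set.indicator_of_notMem, hω]
  have hEq1 : (∫ ω, (∫ s, f (ω, s)) ∂μ)
      = (∫ ω, A.indicator (fun ω => g (τ ω)) ω ∂μ) - g s₀ * F t := by
    rw [integral_congr_ae (Filter.Eventually.of_forall hinner)]
    rw [integral_congr_ae (Filter.Eventually.of_forall hindsub)]
    rw [integral_sub hint1 hint2, integral_indicator_const _ hA, smul_eq_mul, measureReal_def]
    rw [hFdef]
    ring
  have hEq2 : (∫ s, (∫ ω, f (ω, s) ∂μ))
      = ∫ s in Ioo s₀ t, g₁ s * (μ {ω | s ≤ τ ω ∧ τ ω < t}).toReal := by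
    rw [integral_congr_ae (Filter.Eventually.of_forall houter),
      integral_indicator measurableSet_Ioo]
  -- the distribution function
  have hFmono : Monotone F := by
    intro a b hab
    exact ENNReal.toReal_mono (measure_ne_top μ _)
      (measure_mono fun ω hω => lt_of_lt_of_le hω hab)
  have hFmeas : Measurable F := hFmono.measurable
  have hF1 : ∀ s, F s ≤ 1 := by
    intro s
    have h := ENNReal.toReal_mono (by simp) (prob_le_one (μ := μ) (s := {ω | τ ω < s}))
    simpa using h
  have hmeasdiff : ∀ s ∈ Ioo s₀ t,
      (μ {ω | s ≤ τ ω ∧ τ ω < t}).toReal = F t - F s := by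
    intro s hs
    have hsub : {ω | τ ω < s} ⊆ {ω | τ ω < t} := fun ω h => lt_trans h hs.2
    have hseteq : {ω | s ≤ τ ω ∧ τ ω < t} = {ω | τ ω < t} \ {ω | τ ω < s} := by
      ext ω
      simp [not_lt, and_comm]
    rw [hseteq, measure_diff hsub (hτmeas measurableSet_Iio).nullMeasurableSet
      (measure_ne_top μ _),
      ENNReal.toReal_sub_of_le (measure_mono hsub) (measure_ne_top μ _)]
  -- integrable bounds on Ioo s₀ t
  obtain ⟨CG, hCG⟩ : ∃ C, ∀ x ∈ Icc s₀ t, ‖G x‖ ≤ C :=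
    (isCompact_Icc).exists_bound_of_continuousOn hG.continuous.continuousOn
  set C : ℝ := |F t| + CG + 1 with hCdef
  have hintL : IntegrableOn (fun s => g₁ s * (F t - F s)) (Ioo s₀ t) volume := by
    refine Integrable.mono' ((hg₁Ioo.abs).const_mul C)
      ((hg₁meas.mul (measurable_const.sub hFmeas)).aestronglyMeasurable) ?_
    filter_upwards [ae_restrict_mem measurableSet_Ioo] with s hs
    have hb : |F t - F s| ≤ C := by
      have h1 : |F s| ≤ 1 := by
        rw [abs_of_nonneg ENNReal.toReal_nonneg]
        exact hF1 s
      have h2 : 0 ≤ CG := le_trans (norm_nonneg _) (hCG s₀ ⟨le_refl _, ht.le⟩)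
      calc |F t - F s| ≤ |F t| + |F s| := abs_sub _ _
        _ ≤ C := by rw [hCdef]; linarith
    calc ‖g₁ s * (F t - F s)‖ = |g₁ s| * |F t - F s| := abs_mul _ _
      _ ≤ |g₁ s| * C := mul_le_mul_of_nonneg_left hb (abs_nonneg _)
      _ = C * |g₁ s| := mul_comm _ _
  have hintR : IntegrableOn (fun s => g₁ s * (F t - G s)) (Ioo s₀ t) volume := by
    refine Integrable.mono' ((hg₁Ioo.abs).const_mul C)
      ((hg₁meas.mul (measurable_const.sub hG.continuous.measurable)).aestronglyMeasurable) ?_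
    filter_upwards [ae_restrict_mem measurableSet_Ioo] with s hs
    have hb : |F t - G s| ≤ C := by
      have h1 : |G s| ≤ CG := hCG s ⟨hs.1.le, hs.2.le⟩
      calc |F t - G s| ≤ |F t| + |G s| := abs_sub _ _
        _ ≤ C := by rw [hCdef]; linarith
    calc ‖g₁ s * (F t - G s)‖ = |g₁ s| * |F t - G s| := abs_mul _ _
      _ ≤ |g₁ s| * C := mul_le_mul_of_nonneg_left hb (abs_nonneg _)
      _ = C * |g₁ s| := mul_comm _ _
  have hmono2 : (∫ s in Ioo s₀ t, g₁ s * (F t - F s))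
      ≤ ∫ s in Ioo s₀ t, g₁ s * (F t - G s) :=
    setIntegral_mono_on hintL hintR measurableSet_Ioo fun s hs =>
      mul_le_mul_of_nonneg_left (sub_le_sub_left (hFG s) _) (hg₁nn s hs.1)
  -- expansion of the right-hand integral
  have hg₁total : (∫ s in Ioo s₀ t, g₁ s) = g t - g s₀ := by
    rw [← integral_Ioc_eq_integral_Ioo, ← intervalIntegral.integral_of_le ht.le]
    exact hftc t ht.le le_rfl
  have hgG₁Ioo : IntegrableOn (fun s => g₁ s * G s) (Ioo s₀ t) volume :=
    hgG₁int.1.mono_set Ioo_subset_Ioc_self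
  have hg₁G : (∫ s in Ioo s₀ t, g₁ s * G s) = ∫ s in s₀..t, g₁ s * G s := by
    rw [intervalIntegral.integral_of_le ht.le, integral_Ioc_eq_integral_Ioo]
  have hexpand : (∫ s in Ioo s₀ t, g₁ s * (F t - G s))
      = F t * (g t - g s₀) - ∫ s in s₀..t, g₁ s * G s := by
    have hfun : (fun s => g₁ s * (F t - G s))
        = fun s => F t * g₁ s - g₁ s * G s := by
      funext s
      ring
    rw [hfun, integral_sub ((hg₁Ioo.const_mul (F t))) hgG₁Ioo,
      integral_const_mul, hg₁total, hg₁G]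
  -- final assembly
  calc ∫ ω, (Set.Ico s₀ t).indicator (fun _ => (1:ℝ)) (τ ω) * g (τ ω) ∂μ
      = ∫ ω, A.indicator (fun ω => g (τ ω)) ω ∂μ :=
        integral_congr_ae (Filter.Eventually.of_forall hLHSfun)
    _ = (∫ ω, (∫ s, f (ω, s)) ∂μ) + g s₀ * F t := by rw [hEq1]; ring
    _ = (∫ s, (∫ ω, f (ω, s) ∂μ)) + g s₀ * F t := by rw [hswap]
    _ = (∫ s in Ioo s₀ t, g₁ s * (F t - F s)) + g s₀ * F t := by
        rw [hEq2]
        congr 1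
        exact setIntegral_congr_fun measurableSet_Ioo fun s hs => by
          rw [hmeasdiff s hs]
    _ ≤ (∫ s in Ioo s₀ t, g₁ s * (F t - G s)) + g s₀ * F t := by linarith
    _ = F t * (g t - g s₀) - (∫ s in s₀..t, g₁ s * G s) + g s₀ * F t := by
        rw [hexpand]
    _ = g t * F t - (∫ s in s₀..t, g₁ s * G s) := by ring
    _ ≤ g t * (F t - G t) + ∫ s in s₀..t, g s * deriv G s := by
        have h1 : g s₀ * G s₀ ≤ 0 := mul_nonpos_of_nonneg_of_nonpos (hg0 s₀) hGs₀
        linarith [hibp]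
end

section
/- Let ā : [0,T] → ℝ be continuously differentiable with −ā₊ ≤ ā(t) ≤ −ā₋ < 0 and |ā'(t)| ≤ c₂ for all t. With ζ as in the previous context, ζ(t) = 1/(2|ā(t)|) + O(ε) uniformly in t ∈ [0,T]; precisely, there is a constant C = C(ā₋, c₂) such that |ζ(t) − 1/(2|ā(t)|)| ≤ Cε for all t ∈ [0,T]. -/
open Real

/-- The variance-like function `ζ` of Lemma 3.1 / equation (3.6). -/
noncomputable def zetaFn (abar : ℝ → ℝ) (ε : ℝ) (t : ℝ) : ℝ :=
  1 / (2 * |abar 0|) * Real.exp (2 * (∫ u in (0:ℝ)..t, abar u) / ε)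
    + (1 / ε) * ∫ s in (0:ℝ)..t, Real.exp (2 * (∫ u in s..t, abar u) / ε)

set_option maxHeartbeats 1000000 in
/-- Lemma 3.1 (i): `ζ(t) = 1/(2|ā(t)|) + O(ε)` uniformly on `[0,T]`, with a
constant depending only on `ā₋` and `c₂`. -/
theorem stmt5 (aminus c₂ : ℝ) (hm : 0 < aminus) (hc₂ : 0 ≤ c₂) :
    ∃ C > 0, ∀ (T ε aplus : ℝ) (abar : ℝ → ℝ), 0 ≤ T → 0 < ε → aminus ≤ aplus →
      ContDiffOn ℝ 1 abar (Set.Icc 0 T) →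
      (∀ t ∈ Set.Icc (0:ℝ) T, -aplus ≤ abar t ∧ abar t ≤ -aminus) →
      (∀ t ∈ Set.Icc (0:ℝ) T, |derivWithin abar (Set.Icc 0 T) t| ≤ c₂) →
      ∀ t ∈ Set.Icc (0:ℝ) T,
        |zetaFn abar ε t - 1 / (2 * |abar t|)| ≤ C * ε := by
  refine ⟨c₂ / (4 * aminus ^ 3) + 1, by positivity, ?_⟩
  intro T ε aplus abar hT hε hap hC hbnd hder t ht
  obtain ⟨ht0, htT⟩ := ht
  rcases eq_or_lt_of_le ht0 with rfl | htpos
  · simp only [zetaFn, intervalIntegral.integral_same, mul_zero, zero_div, Real.exp_zero,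
      mul_one, add_zero, sub_self, abs_zero]
    positivity
  -- main case 0 < t
  have hTpos : 0 < T := lt_of_lt_of_le htpos htT
  have hsub : Set.Icc (0:ℝ) t ⊆ Set.Icc 0 T := Set.Icc_subset_Icc le_rfl htT
  have htmem : t ∈ Set.Icc (0:ℝ) T := ⟨ht0, htT⟩
  have habar_cont : ContinuousOn abar (Set.Icc 0 T) := hC.continuousOn
  have hneg : ∀ s ∈ Set.Icc (0:ℝ) T, abar s < 0 := fun s hs =>
    lt_of_le_of_lt (hbnd s hs).2 (by linarith)
  have hne : ∀ s ∈ Set.Icc (0:ℝ) T, abar s ≠ 0 := fun s hs => (hneg s hs).ne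
  set A := derivWithin abar (Set.Icc 0 T) with hAdef
  have hUD : UniqueDiffOn ℝ (Set.Icc (0:ℝ) T) := uniqueDiffOn_Icc hTpos
  have hAcont : ContinuousOn A (Set.Icc 0 T) := hC.continuousOn_derivWithin hUD le_rfl
  have habar_int : ∀ a b : ℝ, a ∈ Set.Icc (0:ℝ) T → b ∈ Set.Icc (0:ℝ) T →
      IntervalIntegrable abar MeasureTheory.volume a b := by
    intro a b ha hb
    exact (habar_cont.mono (Set.uIcc_subset_Icc ha hb)).intervalIntegrable
  set G : ℝ → ℝ := fun s => ∫ u in (0:ℝ)..s, abar u with hGdef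
  have hGcont : ContinuousOn G (Set.Icc 0 T) := by
    have := intervalIntegral.continuousOn_primitive_interval'
      (habar_int 0 T ⟨le_rfl, hT⟩ ⟨hT, le_rfl⟩) Set.left_mem_uIcc
    rwa [Set.uIcc_of_le hT] at this
  set e : ℝ → ℝ := fun s => Real.exp (2 * (G t - G s) / ε) with hedef
  set g : ℝ → ℝ := fun s => -(2 * abar s)⁻¹ with hgdef
  set h : ℝ → ℝ := fun s => e s * g s with hhdef
  set r : ℝ → ℝ := fun s => e s * (A s / (2 * (abar s) ^ 2)) with hrdef
  set hd : ℝ → ℝ := fun s => e s / ε + r s with hddef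
  -- derivative of h within Ioi x for x ∈ Ioo 0 t
  have hh' : ∀ x ∈ Set.Ioo (0:ℝ) t, HasDerivWithinAt h (hd x) (Set.Ioi x) x := by
    intro x hx
    have hx0T : x ∈ Set.Icc (0:ℝ) T := ⟨hx.1.le, hx.2.le.trans htT⟩
    have hxT : x < T := lt_of_lt_of_le hx.2 htT
    have hmem : Set.Icc (0:ℝ) T ∈ nhdsWithin x (Set.Ioi x) := by
      refine Filter.mem_of_superset (Ioc_mem_nhdsGT_of_mem ⟨le_refl x, hxT⟩) ?_
      exact Set.Ioc_subset_Icc_self.trans (Set.Icc_subset_Icc hx.1.le le_rfl)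
    have hG' : HasDerivWithinAt G (abar x) (Set.Ioi x) x := by
      have h1 : HasDerivWithinAt G (abar x) (Set.Ici x) x := by
        refine intervalIntegral.integral_hasDerivWithinAt_right
          (habar_int 0 x ⟨le_rfl, hT⟩ hx0T)
          ⟨Set.Icc 0 T, hmem, habar_cont.aestronglyMeasurable measurableSet_Icc⟩ ?_
        exact (habar_cont x hx0T).mono_of_mem_nhdsWithin hmem
      exact h1.mono Set.Ioi_subset_Ici_self
    have habar' : HasDerivWithinAt abar (A x) (Set.Ioi x) x :=
      ((hC.differentiableOn one_ne_zero x hx0T).hasDerivWithinAt).mono_of_mem_nhdsWithin hmem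
    have he' : HasDerivWithinAt e (e x * (2 * (-abar x) / ε)) (Set.Ioi x) x := by
      have : HasDerivWithinAt (fun s => 2 * (G t - G s) / ε) (2 * (-abar x) / ε)
          (Set.Ioi x) x := ((hG'.const_sub (G t)).const_mul 2).div_const ε
      exact this.exp
    have hg' : HasDerivWithinAt g (-(-(2 * A x) / (2 * abar x) ^ 2)) (Set.Ioi x) x := by
      have h2 : (2 : ℝ) * abar x ≠ 0 := by
        have := hne x hx0T; intro hc; apply this; linarith [hc]
      exact ((habar'.const_mul 2).inv h2).neg
    have hmul := he'.mul hg'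
    have heq : e x * (2 * (-abar x) / ε) * g x + e x * (-(-(2 * A x) / (2 * abar x) ^ 2))
        = hd x := by
      have h2 : abar x ≠ 0 := hne x hx0T
      simp only [hddef, hrdef, hgdef]
      field_simp
    rw [heq] at hmul
    exact hmul
  -- continuity pieces on Icc 0 t
  have hecont : ContinuousOn e (Set.Icc 0 t) := by
    refine Real.continuous_exp.comp_continuousOn ?_
    exact (continuousOn_const.mul (continuousOn_const.sub (hGcont.mono hsub))).div_const ε
  have habar_ne' : ∀ s ∈ Set.Icc (0:ℝ) t, 2 * abar s ≠ 0 := by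
    intro s hs
    have := hne s (hsub hs); intro hc; apply this; linarith [hc]
  have hgcont : ContinuousOn g (Set.Icc 0 t) := by
    exact ((continuousOn_const.mul (habar_cont.mono hsub)).inv₀ habar_ne').neg
  have hhcont : ContinuousOn h (Set.Icc 0 t) := hecont.mul hgcont
  have hrcont : ContinuousOn r (Set.Icc 0 t) := by
    refine hecont.mul ((hAcont.mono hsub).div ?_ ?_)
    · exact (continuousOn_const.mul ((habar_cont.mono hsub).pow 2))
    · intro s hs
      have := hne s (hsub hs); positivity
  have hrint : IntervalIntegrable r MeasureTheory.volume 0 t := by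
    refine ContinuousOn.intervalIntegrable ?_
    rwa [Set.uIcc_of_le ht0]
  have heint : IntervalIntegrable e MeasureTheory.volume 0 t := by
    refine ContinuousOn.intervalIntegrable ?_
    rwa [Set.uIcc_of_le ht0]
  have hdint : IntervalIntegrable hd MeasureTheory.volume 0 t :=
    (heint.div_const ε).add hrint
  -- FTC
  have hFTC : ∫ s in (0:ℝ)..t, hd s = h t - h 0 :=
    intervalIntegral.integral_eq_sub_of_hasDeriv_right_of_le ht0 hhcont hh' hdint
  have hsplit : ∫ s in (0:ℝ)..t, hd s
      = (∫ s in (0:ℝ)..t, e s) / ε + ∫ s in (0:ℝ)..t, r s := by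
    rw [show (fun s => hd s) = (fun s => e s / ε + r s) from rfl]
    rw [intervalIntegral.integral_add (heint.div_const ε) hrint,
      intervalIntegral.integral_div]
  -- rewrite zetaFn
  have hz : zetaFn abar ε t = h 0 + (1 / ε) * ∫ s in (0:ℝ)..t, e s := by
    have hG0 : G 0 = 0 := intervalIntegral.integral_same
    have h0eq : h 0 = 1 / (2 * |abar 0|) * Real.exp (2 * (∫ u in (0:ℝ)..t, abar u) / ε) := by
      have hneg0 : abar 0 < 0 := hneg 0 ⟨le_rfl, hT⟩
      have habs : |abar 0| = -abar 0 := abs_of_neg hneg0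
      have hval : -(2 * abar 0)⁻¹ = 1 / (2 * |abar 0|) := by
        rw [habs]; field_simp
      have hGt : (∫ u in (0:ℝ)..t, abar u) = G t := rfl
      simp only [hhdef, hedef, hgdef, hG0, sub_zero, hGt]
      rw [hval, mul_comm]
    have hint_eq : (∫ s in (0:ℝ)..t, Real.exp (2 * (∫ u in s..t, abar u) / ε))
        = ∫ s in (0:ℝ)..t, e s := by
      refine intervalIntegral.integral_congr ?_
      intro s hs
      rw [Set.uIcc_of_le ht0] at hs
      have hsmem : s ∈ Set.Icc (0:ℝ) T := hsub hs
      have : (∫ u in s..t, abar u) = G t - G s := by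
        rw [hGdef]
        exact (intervalIntegral.integral_interval_sub_left
          (habar_int 0 t ⟨le_rfl, hT⟩ htmem) (habar_int 0 s ⟨le_rfl, hT⟩ hsmem)).symm
      simp only [hedef, this]
    rw [zetaFn, h0eq, hint_eq]
  have hht : h t = 1 / (2 * |abar t|) := by
    have hnegt : abar t < 0 := hneg t htmem
    have habs : |abar t| = -abar t := abs_of_neg hnegt
    have h2 : abar t ≠ 0 := hnegt.ne
    simp only [hhdef, hedef, hgdef, sub_self, mul_zero, zero_div, Real.exp_zero, one_mul, habs]
    rw [eq_div_iff (by intro hc; apply h2; nlinarith [abs_nonneg (abar t), habs])]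
    field_simp
  -- the key identity
  have hkey : zetaFn abar ε t - 1 / (2 * |abar t|) = -∫ s in (0:ℝ)..t, r s := by
    have h1 : (∫ s in (0:ℝ)..t, e s) / ε + ∫ s in (0:ℝ)..t, r s = h t - h 0 := by
      rw [← hsplit]; exact hFTC
    rw [hz, ← hht]
    have h2 : (1 / ε) * ∫ s in (0:ℝ)..t, e s = (∫ s in (0:ℝ)..t, e s) / ε := by ring
    rw [h2]; linarith
  -- bounding the remainder integral
  set K : ℝ := c₂ * ε / (4 * aminus ^ 3) with hKdef
  set B : ℝ → ℝ := fun s => Real.exp (2 * aminus / ε * (s - t)) * (c₂ / (2 * aminus ^ 2))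
    with hBdef
  set Φ : ℝ → ℝ := fun s => K * Real.exp (2 * aminus / ε * (s - t)) with hΦdef
  have hΦ' : ∀ s : ℝ, HasDerivAt Φ (B s) s := by
    intro s
    have h1 : HasDerivAt (fun s : ℝ => 2 * aminus / ε * (s - t)) (2 * aminus / ε) s := by
      simpa using (((hasDerivAt_id s).sub_const t).const_mul (2 * aminus / ε))
    have h2 := (h1.exp).const_mul K
    refine h2.congr_deriv ?_
    show c₂ * ε / (4 * aminus ^ 3) * (Real.exp (2 * aminus / ε * (s - t)) * (2 * aminus / ε)) = Real.exp (2 * aminus / ε * (s - t)) * (c₂ / (2 * aminus ^ 2))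
    field_simp
    ring
  have hBcont : Continuous B := by
    simp only [hBdef]; fun_prop
  have hBint : IntervalIntegrable B MeasureTheory.volume 0 t :=
    hBcont.intervalIntegrable 0 t
  have hBcalc : ∫ s in (0:ℝ)..t, B s = Φ t - Φ 0 :=
    intervalIntegral.integral_eq_sub_of_hasDerivAt (fun x _ => hΦ' x) hBint
  have hBle : ∫ s in (0:ℝ)..t, B s ≤ K := by
    rw [hBcalc]
    have h1 : Φ t = K := by simp [hΦdef]
    have h2 : 0 ≤ Φ 0 := by
      have : 0 ≤ K := by positivity
      simp only [hΦdef]; positivity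
    linarith
  -- pointwise bound |r s| ≤ B s on [0,t]
  have hpt : ∀ s ∈ Set.Icc (0:ℝ) t, |r s| ≤ B s := by
    intro s hs
    have hsmem : s ∈ Set.Icc (0:ℝ) T := hsub hs
    have hnegs : abar s < 0 := hneg s hsmem
    have habars : aminus ≤ -abar s := by linarith [(hbnd s hsmem).2]
    have hGle : G t - G s ≤ -aminus * (t - s) := by
      have hst : s ≤ t := hs.2
      have hmono : (∫ u in s..t, abar u) ≤ ∫ u in s..t, (-aminus : ℝ) := by
        refine intervalIntegral.integral_mono_on hst
          (habar_int s t hsmem htmem) (intervalIntegrable_const) ?_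
        intro u hu
        exact (hbnd u ⟨hu.1.trans' hsmem.1, hu.2.trans htT⟩).2.trans (by linarith)
      have hconst : (∫ u in s..t, (-aminus : ℝ)) = -aminus * (t - s) := by
        simp [mul_comm]
      have hGsub : G t - G s = ∫ u in s..t, abar u :=
        intervalIntegral.integral_interval_sub_left
          (habar_int 0 t ⟨le_rfl, hT⟩ htmem) (habar_int 0 s ⟨le_rfl, hT⟩ hsmem)
      rw [hGsub]; rw [hconst] at hmono; exact hmono
    have hele : e s ≤ Real.exp (2 * aminus / ε * (s - t)) := by
      apply Real.exp_le_exp.2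
      have h3 : 2 * aminus / ε * (s - t) = 2 * aminus * (s - t) / ε := by ring
      rw [h3]
      exact (div_le_div_iff_of_pos_right hε).2 (by nlinarith [hGle])
    have hA_le : |A s| / (2 * (abar s) ^ 2) ≤ c₂ / (2 * aminus ^ 2) := by
      apply div_le_div₀ hc₂ (hder s hsmem) (by positivity)
      nlinarith [habars, hm]
    have habs_r : |r s| = e s * (|A s| / (2 * (abar s) ^ 2)) := by
      simp only [hrdef]
      rw [abs_mul, abs_of_pos (Real.exp_pos _), abs_div]
      congr 1
      rw [abs_of_pos (by nlinarith [hnegs] : (0:ℝ) < 2 * abar s ^ 2)]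
    rw [habs_r, hBdef]
    have he_pos : (0:ℝ) ≤ e s := (Real.exp_pos _).le
    exact mul_le_mul hele hA_le (by positivity) (Real.exp_pos _).le
  -- put it together
  have hbound : |∫ s in (0:ℝ)..t, r s| ≤ K := by
    calc |∫ s in (0:ℝ)..t, r s| ≤ ∫ s in (0:ℝ)..t, |r s| :=
          intervalIntegral.abs_integral_le_integral_abs ht0
      _ ≤ ∫ s in (0:ℝ)..t, B s := by
          refine intervalIntegral.integral_mono_on ht0 hrint.abs hBint hpt
      _ ≤ K := hBle
  rw [hkey, abs_neg]
  calc |∫ s in (0:ℝ)..t, r s| ≤ K := hbound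
    _ ≤ (c₂ / (4 * aminus ^ 3) + 1) * ε := by
        rw [hKdef]
        have h4 : c₂ * ε / (4 * aminus ^ 3) = c₂ / (4 * aminus ^ 3) * ε := by ring
        rw [h4]
        nlinarith [hε.le]
end

section
/- Let a : [t₀, T] → ℝ satisfy a₊ t ≤ a(t) ≤ a₋ t for t₀ ≤ t ≤ 0 (with 0 < a₋ ≤ a₊, t₀ < 0), and define ζ(t) = (1/(2|a(t₀)|)) e^{2α(t,t₀)/ε} + (1/ε) ∫_{t₀}^t e^{2α(t,s)/ε} ds with α(t,s) = ∫_s^t a(u) du. If ε ≤ 4 a(t₀)² and ε ≤ (t₀/2)², then for all t ∈ [t₀, −√ε]: ζ(t) ≤ (1/|t|)(1/(2a₋) + 1/(2a₊)). -/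
open Real MeasureTheory

/-- Lemma 4.2, upper bound for `t₀ ≤ t ≤ -√ε`:
`ζ(t) ≤ (1/|t|)(1/(2a₋) + 1/(2a₊))`. -/
theorem stmt7 (t₀ T aplus aminus ε : ℝ) (a : ℝ → ℝ) (ht₀ : t₀ < 0) (hT : 0 < T)
    (hm : 0 < aminus) (hpm : aminus ≤ aplus)
    (hε : 0 < ε) (hε1 : ε ≤ 4 * (a t₀) ^ 2) (hε2 : ε ≤ (t₀ / 2) ^ 2)
    (hint : IntervalIntegrable a volume t₀ T)
    (hneg : ∀ t ∈ Set.Icc t₀ 0, aplus * t ≤ a t ∧ a t ≤ aminus * t) :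
    ∀ t : ℝ, t₀ ≤ t → t ≤ -Real.sqrt ε →
      1 / (2 * |a t₀|) * Real.exp (2 * (∫ u in t₀..t, a u) / ε)
          + (1 / ε) * ∫ s in t₀..t, Real.exp (2 * (∫ u in s..t, a u) / ε)
        ≤ (1 / |t|) * (1 / (2 * aminus) + 1 / (2 * aplus)) := by
  intro t ht0t htε
  have hsq : 0 < Real.sqrt ε := Real.sqrt_pos.mpr hε
  have htneg : t < 0 := lt_of_le_of_lt htε (by linarith)
  have ht0T : t₀ ≤ T := (ht₀.trans hT).le
  -- integrability of a on subintervals of [t₀, t]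
  have hintsub : ∀ s, t₀ ≤ s → s ≤ t → IntervalIntegrable a volume s t := by
    intro s hs hst
    apply hint.mono_set
    apply Set.uIcc_subset_uIcc
    · rw [Set.uIcc_of_le ht0T]; exact ⟨hs, hst.trans (htneg.le.trans hT.le)⟩
    · rw [Set.uIcc_of_le ht0T]; exact ⟨hs.trans hst, htneg.le.trans hT.le⟩
  set c : ℝ := 2 * aminus * (-t) / ε with hc
  have hcpos : 0 < c := by
    apply div_pos _ hε
    have : 0 < -t := neg_pos.mpr htneg
    positivity
  -- key pointwise bound on the integral of a
  have key : ∀ s, t₀ ≤ s → s ≤ t → (∫ u in s..t, a u) ≤ aminus * t * (t - s) := by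
    intro s hs hst
    have h1 : (∫ u in s..t, a u) ≤ ∫ u in s..t, aminus * u := by
      apply intervalIntegral.integral_mono_on hst (hintsub s hs hst)
      · exact (continuous_const.mul continuous_id).intervalIntegrable _ _
      · intro x hx
        exact (hneg x ⟨hs.trans hx.1, hx.2.trans htneg.le⟩).2
    have h2 : (∫ u in s..t, aminus * u) = aminus * ((t ^ 2 - s ^ 2) / 2) := by
      rw [intervalIntegral.integral_const_mul, integral_id]
    rw [h2] at h1
    nlinarith [mul_nonneg hm.le (sq_nonneg (t - s))]
  have hexpkey : ∀ s, t₀ ≤ s → s ≤ t →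
      Real.exp (2 * (∫ u in s..t, a u) / ε) ≤ Real.exp (c * (s - t)) := by
    intro s hs hst
    apply Real.exp_le_exp.mpr
    have := key s hs hst
    rw [div_le_iff₀ hε] at *
    rw [hc]
    have h2 : c * (s - t) * ε = 2 * aminus * (-t) * (s - t) := by
      rw [hc, div_mul_eq_mul_div, div_mul_cancel₀ _ hε.ne']
    calc 2 * (∫ u in s..t, a u) ≤ 2 * (aminus * t * (t - s)) := by linarith
    _ = c * (s - t) * ε := by rw [h2]; ring
  -- continuity / integrability of the integrand in term 2
  have hcont : ContinuousOn (fun s => ∫ u in s..t, a u) (Set.uIcc t₀ t) := by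
    apply intervalIntegral.continuousOn_primitive_interval_left
    rw [Set.uIcc_of_le ht0t]
    exact (intervalIntegrable_iff_integrableOn_Icc_of_le ht0t).mp (hintsub t₀ le_rfl ht0t)
  have hint2 : IntervalIntegrable (fun s => Real.exp (2 * (∫ u in s..t, a u) / ε))
      volume t₀ t := by
    apply ContinuousOn.intervalIntegrable
    exact (Real.continuous_exp.comp_continuousOn
      (((continuousOn_const.mul hcont).div_const ε)))
  -- bound term 2
  have hterm2 : (∫ s in t₀..t, Real.exp (2 * (∫ u in s..t, a u) / ε))
      ≤ (1 - Real.exp (c * (t₀ - t))) / c := by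
    have hmono : (∫ s in t₀..t, Real.exp (2 * (∫ u in s..t, a u) / ε))
        ≤ ∫ s in t₀..t, Real.exp (c * (s - t)) := by
      apply intervalIntegral.integral_mono_on ht0t hint2
      · exact (Real.continuous_exp.comp
          ((continuous_const.mul (continuous_id.sub continuous_const)))).intervalIntegrable _ _
      · intro x hx; exact hexpkey x hx.1 hx.2
    have hcalc : (∫ s in t₀..t, Real.exp (c * (s - t)))
        = Real.exp (c * (t - t)) / c - Real.exp (c * (t₀ - t)) / c := by
      have hd : ∀ s ∈ Set.uIcc t₀ t,
          HasDerivAt (fun x => Real.exp (c * (x - t)) / c) (Real.exp (c * (s - t))) s := by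
        intro s _
        have h1 : HasDerivAt (fun x => Real.exp (c * (x - t)))
            (Real.exp (c * (s - t)) * c) s := by
          have : HasDerivAt (fun x : ℝ => c * (x - t)) c s := by
            simpa using (((hasDerivAt_id s).sub_const t).const_mul c)
          simpa [mul_comm] using this.exp
        have := h1.div_const c
        simpa [mul_div_assoc, mul_div_cancel_right₀ _ hcpos.ne'] using this
      rw [intervalIntegral.integral_eq_sub_of_hasDerivAt hd
        ((Real.continuous_exp.comp
          (continuous_const.mul (continuous_id.sub continuous_const))).intervalIntegrable _ _)]
    rw [hcalc] at hmono
    calc (∫ s in t₀..t, Real.exp (2 * (∫ u in s..t, a u) / ε))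
        ≤ Real.exp (c * (t - t)) / c - Real.exp (c * (t₀ - t)) / c := hmono
      _ = (1 - Real.exp (c * (t₀ - t))) / c := by
          rw [sub_self, mul_zero, Real.exp_zero]; ring
  -- bound term 1
  have hat₀ : a t₀ ≤ aminus * t₀ := (hneg t₀ ⟨le_rfl, ht₀.le⟩).2
  have habs : aminus * (-t₀) ≤ |a t₀| := by
    rw [abs_of_neg (by nlinarith : a t₀ < 0)]; nlinarith
  have hterm1 : 1 / (2 * |a t₀|) * Real.exp (2 * (∫ u in t₀..t, a u) / ε)
      ≤ Real.exp (c * (t₀ - t)) / (2 * aminus * (-t)) := by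
    have h1 : Real.exp (2 * (∫ u in t₀..t, a u) / ε) ≤ Real.exp (c * (t₀ - t)) := by
      simpa using hexpkey t₀ le_rfl ht0t
    have h2 : (1 : ℝ) / (2 * |a t₀|) ≤ 1 / (2 * aminus * (-t)) := by
      apply one_div_le_one_div_of_le
      · have : 0 < -t := neg_pos.mpr htneg; positivity
      · calc 2 * aminus * (-t) ≤ 2 * (aminus * (-t₀)) := by nlinarith
          _ ≤ 2 * |a t₀| := by linarith
    calc 1 / (2 * |a t₀|) * Real.exp (2 * (∫ u in t₀..t, a u) / ε)
        ≤ 1 / (2 * aminus * (-t)) * Real.exp (c * (t₀ - t)) := by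
          apply mul_le_mul h2 h1 (Real.exp_pos _).le
          apply le_of_lt; apply div_pos one_pos; nlinarith
      _ = Real.exp (c * (t₀ - t)) / (2 * aminus * (-t)) := by ring
  -- assemble
  have hεc : ε * c = 2 * aminus * (-t) := by
    rw [hc]; field_simp
  have hmt : (0 : ℝ) < -t := neg_pos.mpr htneg
  have hsum : 1 / (2 * |a t₀|) * Real.exp (2 * (∫ u in t₀..t, a u) / ε)
      + (1 / ε) * (∫ s in t₀..t, Real.exp (2 * (∫ u in s..t, a u) / ε))
      ≤ 1 / (2 * aminus * (-t)) := by
    have h2 : (1 / ε) * (∫ s in t₀..t, Real.exp (2 * (∫ u in s..t, a u) / ε))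
        ≤ (1 - Real.exp (c * (t₀ - t))) / (2 * aminus * (-t)) := by
      have := mul_le_mul_of_nonneg_left hterm2 (by positivity : (0:ℝ) ≤ 1 / ε)
      calc (1 / ε) * (∫ s in t₀..t, Real.exp (2 * (∫ u in s..t, a u) / ε))
          ≤ (1 / ε) * ((1 - Real.exp (c * (t₀ - t))) / c) := this
        _ = (1 - Real.exp (c * (t₀ - t))) / (ε * c) := by
            field_simp
        _ = (1 - Real.exp (c * (t₀ - t))) / (2 * aminus * (-t)) := by rw [hεc]
    have hE1 : Real.exp (c * (t₀ - t)) ≤ 1 := by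
      apply Real.exp_le_one_iff.mpr
      nlinarith [hcpos, sub_nonpos.mpr ht0t]
    have := add_le_add hterm1 h2
    calc 1 / (2 * |a t₀|) * Real.exp (2 * (∫ u in t₀..t, a u) / ε)
        + (1 / ε) * (∫ s in t₀..t, Real.exp (2 * (∫ u in s..t, a u) / ε))
        ≤ Real.exp (c * (t₀ - t)) / (2 * aminus * (-t))
          + (1 - Real.exp (c * (t₀ - t))) / (2 * aminus * (-t)) := this
      _ = 1 / (2 * aminus * (-t)) := by ring_nf
  calc 1 / (2 * |a t₀|) * Real.exp (2 * (∫ u in t₀..t, a u) / ε)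
      + (1 / ε) * (∫ s in t₀..t, Real.exp (2 * (∫ u in s..t, a u) / ε))
      ≤ 1 / (2 * aminus * (-t)) := hsum
    _ ≤ (1 / |t|) * (1 / (2 * aminus) + 1 / (2 * aplus)) := by
        rw [abs_of_neg htneg]
        have h1 : 1 / (2 * aminus * (-t)) = (1 / (-t)) * (1 / (2 * aminus)) := by
          rw [div_mul_div_comm, one_mul]; ring_nf
        rw [h1, mul_add]
        have : 0 ≤ (1 / (-t)) * (1 / (2 * aplus)) :=
          mul_nonneg (le_of_lt (div_pos one_pos hmt))
            (le_of_lt (div_pos one_pos (by linarith)))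
        linarith
end

section
/- Let a : [t₀, T] → ℝ be continuously differentiable with a'(t) > 0 for all t, and a(t₀) < 0. Then the solution ζ of the initial value problem εζ' = 2a(t)ζ + 1, ζ(t₀) = 1/(2|a(t₀)|), is nondecreasing on [t₀, T] (as long as a remains negative or becomes positive). -/
open Real Set Filter Topology

/-- helper: if `0 ≤ g x` for interior points below `u`, ζ is monotone on `Icc t₀ u`. -/
theorem stmt8_aux (t₀ T ε u : ℝ) (hε : 0 < ε)
    (a ζ : ℝ → ℝ)
    (hζ : ∀ t ∈ Set.Icc t₀ T,
      HasDerivWithinAt ζ ((2 * a t * ζ t + 1) / ε) (Set.Icc t₀ T) t)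
    (hu : u ≤ T)
    (hg : ∀ x ∈ Set.Ioo t₀ u, 0 ≤ 2 * a x * ζ x + 1) :
    MonotoneOn ζ (Set.Icc t₀ u) := by
  have hsub : Set.Icc t₀ u ⊆ Set.Icc t₀ T := Set.Icc_subset_Icc le_rfl hu
  have hζc : ContinuousOn ζ (Set.Icc t₀ u) :=
    fun t htu => ((hζ t (hsub htu)).continuousWithinAt).mono hsub
  have hDA : ∀ x ∈ Set.Ioo t₀ u, HasDerivAt ζ ((2 * a x * ζ x + 1) / ε) x := by
    intro x hx
    have hmem : Set.Icc t₀ T ∈ 𝓝 x :=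
      Icc_mem_nhds hx.1 (lt_of_lt_of_le hx.2 hu)
    exact (hζ x (hsub (Set.mem_Icc.2 ⟨hx.1.le, hx.2.le⟩))).hasDerivAt hmem
  refine monotoneOn_of_deriv_nonneg (convex_Icc _ _) hζc ?_ ?_
  · rw [interior_Icc]
    exact fun x hx => ((hDA x hx).differentiableAt).differentiableWithinAt
  · rw [interior_Icc]
    intro x hx
    rw [(hDA x hx).deriv]
    exact div_nonneg (hg x hx) hε.le

/-- Monotonicity of the solution of `εζ' = 2a(t)ζ + 1`, `ζ(t₀) = 1/(2|a(t₀)|)`,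
when `a` is strictly increasing with `a(t₀) < 0` (Lemma 4.2, last part). -/
theorem stmt8 (t₀ T ε : ℝ) (ht : t₀ ≤ T) (hε : 0 < ε)
    (a ζ : ℝ → ℝ)
    (haC : ContDiffOn ℝ 1 a (Set.Icc t₀ T))
    (ha' : ∀ t ∈ Set.Icc t₀ T, 0 < derivWithin a (Set.Icc t₀ T) t)
    (ha0 : a t₀ < 0)
    (hζ0 : ζ t₀ = 1 / (2 * |a t₀|))
    (hζ : ∀ t ∈ Set.Icc t₀ T,
      HasDerivWithinAt ζ ((2 * a t * ζ t + 1) / ε) (Set.Icc t₀ T) t) :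
    MonotoneOn ζ (Set.Icc t₀ T) := by
  set D := Set.Icc t₀ T with hDdef
  set g : ℝ → ℝ := fun t => 2 * a t * ζ t + 1 with hgdef
  have hζc : ContinuousOn ζ D := fun t htD => (hζ t htD).continuousWithinAt
  have hac : ContinuousOn a D := haC.continuousOn
  have hgc : ContinuousOn g D := by
    apply ContinuousOn.add _ continuousOn_const
    exact (continuousOn_const.mul hac).mul hζc
  have habs : |a t₀| = -a t₀ := abs_of_neg ha0
  have hane : a t₀ ≠ 0 := ne_of_lt ha0
  have hg0 : g t₀ = 0 := by
    simp only [hgdef, hζ0, habs]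
    field_simp
    norm_num
  have hζ0pos : 0 < ζ t₀ := by
    have hpos : 0 < -a t₀ := neg_pos.2 ha0
    rw [hζ0, habs]; positivity
  -- key claim
  have key : ∀ t ∈ D, 0 ≤ g t := by
    by_contra h
    push_neg at h
    obtain ⟨t', ht'D, hgt'⟩ := h
    set S : Set ℝ := {t | t ∈ D ∧ g t < 0} with hSdef
    have hSne : S.Nonempty := ⟨t', ht'D, hgt'⟩
    have hSbdd : BddBelow S := ⟨t₀, fun s hs => hs.1.1⟩
    set t₁ := sInf S with ht₁def
    have ht₁le : ∀ s ∈ S, t₁ ≤ s := fun s hs => csInf_le hSbdd hs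
    have ht₁cl : t₁ ∈ closure S := csInf_mem_closure hSne hSbdd
    have hSsubD : S ⊆ D := fun s hs => hs.1
    have ht₁D : t₁ ∈ D := isClosed_Icc.closure_subset (closure_mono hSsubD ht₁cl)
    -- g t₁ ≤ 0 by continuity from within S
    have hg1le : g t₁ ≤ 0 := by
      have hcw : ContinuousWithinAt g S t₁ := (hgc.continuousWithinAt ht₁D).mono hSsubD
      have hne : (𝓝[S] t₁).NeBot := mem_closure_iff_nhdsWithin_neBot.1 ht₁cl
      refine le_of_tendsto hcw ?_
      filter_upwards [self_mem_nhdsWithin] with s hs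
      exact hs.2.le
    -- g ≥ 0 strictly before t₁
    have hge : ∀ x, x ∈ D → x < t₁ → 0 ≤ g x := by
      intro x hxD hlt
      by_contra hneg
      push_neg at hneg
      exact absurd (ht₁le x ⟨hxD, hneg⟩) (not_le.2 hlt)
    -- g t₁ ≥ 0, hence = 0
    have hg1 : g t₁ = 0 := by
      rcases eq_or_lt_of_le ht₁D.1 with heq | hlt
      · rw [← heq]; exact hg0
      · refine le_antisymm hg1le ?_
        have hcw : ContinuousWithinAt g (Set.Ico t₀ t₁) t₁ := by
          refine (hgc.continuousWithinAt ht₁D).mono ?_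
          exact fun x hx => ⟨hx.1, hx.2.le.trans ht₁D.2⟩
        have hne : (𝓝[Set.Ico t₀ t₁] t₁).NeBot := by
          apply mem_closure_iff_nhdsWithin_neBot.1
          rw [closure_Ico (ne_of_lt hlt)]
          exact ⟨ht₁D.1, le_rfl⟩
        refine ge_of_tendsto hcw ?_
        filter_upwards [self_mem_nhdsWithin] with x hx
        exact hge x ⟨hx.1, hx.2.le.trans ht₁D.2⟩ hx.2
    -- ζ t₁ > 0
    have hζ1pos : 0 < ζ t₁ := by
      have hmono : MonotoneOn ζ (Set.Icc t₀ t₁) := by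
        refine stmt8_aux t₀ T ε t₁ hε a ζ hζ ht₁D.2 ?_
        intro x hx
        exact hge x (Set.mem_Icc.2 ⟨hx.1.le, hx.2.le.trans ht₁D.2⟩) hx.2
      have := hmono (Set.left_mem_Icc.2 ht₁D.1) (Set.right_mem_Icc.2 ht₁D.1) ht₁D.1
      linarith
    -- derivative of g at t₁ within D
    have haD : HasDerivWithinAt a (derivWithin a D t₁) D t₁ :=
      ((haC.differentiableOn one_ne_zero) t₁ ht₁D).hasDerivWithinAt
    have hgd : HasDerivWithinAt g
        (2 * derivWithin a D t₁ * ζ t₁ + 2 * a t₁ * ((2 * a t₁ * ζ t₁ + 1) / ε)) D t₁ := by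
      have h1 : HasDerivWithinAt (fun t => 2 * a t) (2 * derivWithin a D t₁) D t₁ :=
        haD.const_mul 2
      have h2 := (h1.mul (hζ t₁ ht₁D)).add_const 1
      exact h2
      try ring
    have hgval : (2 * a t₁ * ζ t₁ + 1) = 0 := hg1
    have hd : HasDerivWithinAt g (2 * derivWithin a D t₁ * ζ t₁) D t₁ := by
      have h3 := hgd
      rw [hgval] at h3
      simpa using h3
    have hdpos : 0 < 2 * derivWithin a D t₁ * ζ t₁ := by
      have := ha' t₁ ht₁D
      positivity
    -- slope contradiction
    have hdS : HasDerivWithinAt g (2 * derivWithin a D t₁ * ζ t₁) S t₁ := hd.mono hSsubD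
    have htend := hasDerivWithinAt_iff_tendsto_slope.1 hdS
    have ht₁nS : t₁ ∉ S := fun hmem => absurd hg1 (ne_of_lt hmem.2)
    have hSd : S \ {t₁} = S := by
      ext x; simp only [Set.mem_diff, Set.mem_singleton_iff]
      exact ⟨fun ⟨h1, _⟩ => h1, fun h1 => ⟨h1, fun he => ht₁nS (he ▸ h1)⟩⟩
    rw [hSd] at htend
    have hne : (𝓝[S] t₁).NeBot := mem_closure_iff_nhdsWithin_neBot.1 ht₁cl
    have hev : ∀ᶠ s in 𝓝[S] t₁, 0 < slope g t₁ s :=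
      htend (eventually_gt_nhds hdpos)
    obtain ⟨s, hs1, hs2⟩ := (hev.and self_mem_nhdsWithin).exists
    -- slope g t₁ s = g s / (s - t₁) < 0
    have hst : t₁ < s := lt_of_le_of_ne (ht₁le s hs2) (fun he => ht₁nS (he ▸ hs2))
    have : slope g t₁ s < 0 := by
      rw [slope_def_field]
      rw [div_neg_iff]
      right
      constructor
      · rw [hg1]; simpa using hs2.2
      · linarith
    linarith
  -- conclude
  exact stmt8_aux t₀ T ε T hε a ζ hζ le_rfl
    (fun x hx => key x (Set.mem_Icc.2 ⟨hx.1.le, hx.2.le⟩))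
end

section
/- With the notation of the previous context (a ≥ 0 integrable on [s,t], α(u,s) = ∫_s^u a, g(u,s) = e^{−κα(u,s)/ε}/√(1−e^{−2κα(u,s)/ε}), and φ = e^{−κα(t,s)/ε}), one has the exact identity ∫_s^t (a(u)/ε) e^{−κα(u,s)/ε} g(t,u) g(u,s) du = (π/(2κ)) φ. -/
open Real MeasureTheory

open Set
open scoped NNReal ENNReal

noncomputable def Haux (κ ε T x : ℝ) : ℝ :=
  (1/ε) * Real.exp (-κ * x / ε) *
    (Real.exp (-κ * (T - x) / ε) / Real.sqrt (1 - Real.exp (-2 * κ * (T - x) / ε))) *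
    (Real.exp (-κ * x / ε) / Real.sqrt (1 - Real.exp (-2 * κ * x / ε)))

noncomputable def Faux (κ ε T y : ℝ) : ℝ :=
  -(Real.exp (-κ * T / ε) / (2*κ)) *
    Real.arcsin ((2 * Real.exp (-2 * κ * y / ε) - (1 + (Real.exp (-κ * T / ε))^2)) /
      (1 - (Real.exp (-κ * T / ε))^2))

lemma Faux_deriv (κ ε T : ℝ) (hκ : 0 < κ) (hε : 0 < ε) (hT : 0 < T) {x : ℝ}
    (hx : x ∈ Ioo 0 T) : HasDerivAt (Faux κ ε T) (Haux κ ε T x) x := by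
  obtain ⟨hx0, hxT⟩ := hx
  set φ := Real.exp (-κ * T / ε) with hφdef
  set p := Real.exp (-κ * x / ε) with hpdef
  have hφ0 : 0 < φ := Real.exp_pos _
  have hp0 : 0 < p := Real.exp_pos _
  have hφ1 : φ < 1 := by
    rw [hφdef, Real.exp_lt_one_iff, neg_mul, neg_div]
    have : 0 < κ * T / ε := by positivity
    linarith
  have hp1 : p < 1 := by
    rw [hpdef, Real.exp_lt_one_iff, neg_mul, neg_div]
    have : 0 < κ * x / ε := by positivity
    linarith
  have hφp : φ < p := by
    rw [hφdef, hpdef]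
    apply Real.exp_lt_exp.2
    rw [div_lt_div_iff_of_pos_right hε]
    nlinarith
  have h1φ2 : 0 < 1 - φ^2 := by nlinarith
  have h1p2 : 0 < 1 - p^2 := by nlinarith
  have hpφ2 : 0 < p^2 - φ^2 := by nlinarith
  have hw2 : Real.exp (-2 * κ * x / ε) = p^2 := by
    rw [hpdef, sq, ← Real.exp_add]; congr 1; ring
  have hφ2 : Real.exp (-2 * κ * T / ε) = φ^2 := by
    rw [hφdef, sq, ← Real.exp_add]; congr 1; ring
  -- the inner affine-of-exp function
  have d1 : HasDerivAt (fun y : ℝ => -2 * κ * y / ε) (-2 * κ / ε) x := by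
    simpa using ((hasDerivAt_id x).const_mul (-2 * κ)).div_const ε
  have d2 := d1.exp
  have d3 := ((d2.const_mul 2).sub_const (1 + φ^2)).div_const (1 - φ^2)
  set z := (2 * Real.exp (-2 * κ * x / ε) - (1 + φ^2)) / (1 - φ^2) with hzdef
  have hz1 : -1 < z := by
    rw [hzdef, hw2, lt_div_iff₀ h1φ2]; nlinarith
  have hz2 : z < 1 := by
    rw [hzdef, hw2, div_lt_one h1φ2]; nlinarith
  have d4 := (Real.hasDerivAt_arcsin (ne_of_gt hz1) (ne_of_lt hz2)).comp x d3
  have d5 := d4.const_mul (-(φ / (2*κ)))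
  have hkey : Real.sqrt (1 - z^2) = 2 * Real.sqrt (1 - p^2) * Real.sqrt (p^2 - φ^2) / (1 - φ^2) := by
    have h1 : 1 - z^2 = (2/(1-φ^2))^2 * ((1 - p^2) * (p^2 - φ^2)) := by
      rw [hzdef, hw2]; field_simp; ring
    rw [h1, Real.sqrt_mul (sq_nonneg _), Real.sqrt_sq (by positivity : (0:ℝ) ≤ 2/(1-φ^2)),
      Real.sqrt_mul h1p2.le]
    ring
  have hq : Real.exp (-κ * (T - x) / ε) = φ / p := by
    rw [hφdef, hpdef, ← Real.exp_sub]; congr 1; ring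
  have hqq : Real.exp (-2 * κ * (T - x) / ε) = φ^2 / p^2 := by
    rw [← hw2, ← hφ2, ← Real.exp_sub]; congr 1; ring
  have hsp0 : 0 < Real.sqrt (1 - p^2) := Real.sqrt_pos.2 h1p2
  have hsq0 : 0 < Real.sqrt (p^2 - φ^2) := Real.sqrt_pos.2 hpφ2
  have hval : Haux κ ε T x =
      -(φ / (2*κ)) * (1 / Real.sqrt (1 - z^2) *
        (2 * (Real.exp (-2 * κ * x / ε) * (-2 * κ / ε)) / (1 - φ^2))) := by
    rw [hkey]
    unfold Haux
    rw [hq, hqq, hw2, show (1:ℝ) - φ^2/p^2 = (p^2 - φ^2)/p^2 by field_simp,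
      Real.sqrt_div' _ (by positivity : (0:ℝ) ≤ p^2), Real.sqrt_sq hp0.le]
    rw [← hpdef]
    field_simp
  rw [hval]
  have hF : Faux κ ε T = fun y => -(φ/(2*κ)) *
      Real.arcsin ((2 * Real.exp (-2*κ*y/ε) - (1+φ^2))/(1-φ^2)) := by
    funext y; simp only [Faux, ← hφdef]
  rw [hF]
  simpa [Function.comp] using d5

lemma Haux_nonneg (κ ε T x : ℝ) (hε : 0 < ε) : 0 ≤ Haux κ ε T x := by
  unfold Haux
  positivity

lemma Haux_meas (κ ε T : ℝ) : Measurable (Haux κ ε T) := by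
  unfold Haux
  fun_prop

lemma Haux_bound_left (κ ε T : ℝ) (hκ : 0 < κ) (hε : 0 < ε) (hT : 0 < T) {x : ℝ}
    (hx : x ∈ Ioc 0 (T/2)) :
    Haux κ ε T x ≤ ((1/ε) * 1 * (1 / Real.sqrt (1 - Real.exp (-κ*T/ε))) *
      (1 / Real.sqrt (2*κ*(Real.exp (-κ*T/ε))^2/ε))) * x ^ (-(1/2) : ℝ) := by
  obtain ⟨hx0, hxT⟩ := hx
  set φ := Real.exp (-κ * T / ε) with hφdef
  have hφ0 : 0 < φ := Real.exp_pos _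
  have hφ1 : φ < 1 := by
    rw [hφdef, Real.exp_lt_one_iff, neg_mul, neg_div]
    have : 0 < κ * T / ε := by positivity
    linarith
  have hφ2 : Real.exp (-2 * κ * T / ε) = φ^2 := by
    rw [hφdef, sq, ← Real.exp_add]; congr 1; ring
  set e1 := Real.exp (-2 * κ * (T - x) / ε) with he1def
  set e2 := Real.exp (-2 * κ * x / ε) with he2def
  have he2pos : 0 < e2 := Real.exp_pos _
  have h1 : e1 ≤ φ := by
    rw [he1def, hφdef]
    apply Real.exp_le_exp.2
    rw [div_le_div_iff_of_pos_right hε]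
    nlinarith
  have hone : e2 * Real.exp (2 * κ * x / ε) = 1 := by
    rw [he2def, ← Real.exp_add, show -2*κ*x/ε + 2*κ*x/ε = 0 by ring, Real.exp_zero]
  have hexp := Real.add_one_le_exp (2 * κ * x / ε)
  have h2a : (2*κ*x/ε) * e2 + e2 ≤ 1 := by nlinarith
  have hφ2e2 : φ^2 ≤ e2 := by
    rw [← hφ2, he2def]
    apply Real.exp_le_exp.2
    rw [div_le_div_iff_of_pos_right hε]
    nlinarith
  clear_value φ e1 e2
  have h2 : 2*κ*φ^2/ε * x ≤ 1 - e2 := by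
    have hc : 0 ≤ 2*κ*x/ε := by positivity
    have hm : (2*κ*x/ε) * φ^2 ≤ (2*κ*x/ε) * e2 := mul_le_mul_of_nonneg_left hφ2e2 hc
    have hr : 2*κ*φ^2/ε * x = 2*κ*x/ε * φ^2 := by ring
    rw [hr]
    linarith
  have hq1 : Real.exp (-κ*(T-x)/ε) ≤ 1 := by
    rw [Real.exp_le_one_iff, neg_mul, neg_div]
    have : 0 ≤ κ*(T-x)/ε := by
      apply div_nonneg _ hε.le
      nlinarith
    linarith
  have hp1 : Real.exp (-κ*x/ε) ≤ 1 := by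
    rw [Real.exp_le_one_iff, neg_mul, neg_div]
    have : 0 ≤ κ*x/ε := by positivity
    linarith
  have hs1 : Real.sqrt (1-φ) ≤ Real.sqrt (1-e1) := Real.sqrt_le_sqrt (by linarith)
  have hs2 : Real.sqrt (2*κ*φ^2/ε * x) ≤ Real.sqrt (1-e2) := Real.sqrt_le_sqrt (by linarith)
  have hs1p : 0 < Real.sqrt (1-φ) := Real.sqrt_pos.2 (by linarith)
  have hs2p : 0 < Real.sqrt (2*κ*φ^2/ε * x) :=
    Real.sqrt_pos.2 (mul_pos (by positivity) hx0)
  have hb : Haux κ ε T x ≤ (1/ε) * 1 * (1 / Real.sqrt (1 - φ)) *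
      (1 / Real.sqrt (2*κ*φ^2/ε * x)) := by
    unfold Haux
    rw [← he1def, ← he2def]
    gcongr <;> first
      | positivity
      | exact hq1 | exact hp1 | exact hs1 | exact hs2 | exact hs1p | exact hs2p
      | exact Real.sqrt_nonneg _
  calc Haux κ ε T x ≤ _ := hb
    _ = _ := by
      rw [Real.sqrt_mul (by positivity : (0:ℝ) ≤ 2*κ*φ^2/ε),
        show x ^ (-(1/2):ℝ) = (Real.sqrt x)⁻¹ by
          rw [Real.rpow_neg hx0.le, ← Real.sqrt_eq_rpow]]
      field_simp

lemma Haux_bound_right (κ ε T : ℝ) (hκ : 0 < κ) (hε : 0 < ε) (hT : 0 < T) {x : ℝ}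
    (hx : x ∈ Ico (T/2) T) :
    Haux κ ε T x ≤ ((1/ε) * 1 * (1 / Real.sqrt (2*κ*(Real.exp (-κ*T/ε))^2/ε)) *
      (1 / Real.sqrt (1 - Real.exp (-κ*T/ε)))) * (T - x) ^ (-(1/2) : ℝ) := by
  obtain ⟨hx0, hxT⟩ := hx
  have hy0 : 0 < T - x := by linarith
  have hx0' : 0 ≤ x := by linarith
  set φ := Real.exp (-κ * T / ε) with hφdef
  have hφ0 : 0 < φ := Real.exp_pos _
  have hφ1 : φ < 1 := by
    rw [hφdef, Real.exp_lt_one_iff, neg_mul, neg_div]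
    have : 0 < κ * T / ε := by positivity
    linarith
  have hφ2 : Real.exp (-2 * κ * T / ε) = φ^2 := by
    rw [hφdef, sq, ← Real.exp_add]; congr 1; ring
  set e1 := Real.exp (-2 * κ * (T - x) / ε) with he1def
  set e2 := Real.exp (-2 * κ * x / ε) with he2def
  have he1pos : 0 < e1 := Real.exp_pos _
  have h1 : e2 ≤ φ := by
    rw [he2def, hφdef]
    apply Real.exp_le_exp.2
    rw [div_le_div_iff_of_pos_right hε]
    nlinarith
  have hone : e1 * Real.exp (2 * κ * (T - x) / ε) = 1 := by
    rw [he1def, ← Real.exp_add, show -2*κ*(T-x)/ε + 2*κ*(T-x)/ε = 0 by ring, Real.exp_zero]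
  have hexp := Real.add_one_le_exp (2 * κ * (T - x) / ε)
  have h2a : (2*κ*(T-x)/ε) * e1 + e1 ≤ 1 := by nlinarith
  have hφ2e1 : φ^2 ≤ e1 := by
    rw [← hφ2, he1def]
    apply Real.exp_le_exp.2
    rw [div_le_div_iff_of_pos_right hε]
    nlinarith
  clear_value φ e1 e2
  have h2 : 2*κ*φ^2/ε * (T - x) ≤ 1 - e1 := by
    have hc : 0 ≤ 2*κ*(T-x)/ε := by positivity
    have hm : (2*κ*(T-x)/ε) * φ^2 ≤ (2*κ*(T-x)/ε) * e1 := mul_le_mul_of_nonneg_left hφ2e1 hc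
    have hr : 2*κ*φ^2/ε * (T-x) = 2*κ*(T-x)/ε * φ^2 := by ring
    rw [hr]
    linarith
  have hq1 : Real.exp (-κ*(T-x)/ε) ≤ 1 := by
    rw [Real.exp_le_one_iff, neg_mul, neg_div]
    have : 0 ≤ κ*(T-x)/ε := by positivity
    linarith
  have hp1 : Real.exp (-κ*x/ε) ≤ 1 := by
    rw [Real.exp_le_one_iff, neg_mul, neg_div]
    have : 0 ≤ κ*x/ε := by positivity
    linarith
  have hs1 : Real.sqrt (2*κ*φ^2/ε * (T-x)) ≤ Real.sqrt (1-e1) := Real.sqrt_le_sqrt (by linarith)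
  have hs2 : Real.sqrt (1-φ) ≤ Real.sqrt (1-e2) := Real.sqrt_le_sqrt (by linarith)
  have hs2p : 0 < Real.sqrt (1-φ) := Real.sqrt_pos.2 (by linarith)
  have hs1p : 0 < Real.sqrt (2*κ*φ^2/ε * (T-x)) :=
    Real.sqrt_pos.2 (mul_pos (by positivity) hy0)
  have hb : Haux κ ε T x ≤ (1/ε) * 1 * (1 / Real.sqrt (2*κ*φ^2/ε * (T-x))) *
      (1 / Real.sqrt (1 - φ)) := by
    unfold Haux
    rw [← he1def, ← he2def]
    gcongr <;> first
      | positivity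
      | exact hq1 | exact hp1 | exact hs1 | exact hs2 | exact hs1p | exact hs2p
      | exact Real.sqrt_nonneg _
  calc Haux κ ε T x ≤ _ := hb
    _ = _ := by
      rw [Real.sqrt_mul (by positivity : (0:ℝ) ≤ 2*κ*φ^2/ε),
        show (T-x) ^ (-(1/2):ℝ) = (Real.sqrt (T-x))⁻¹ by
          rw [Real.rpow_neg hy0.le, ← Real.sqrt_eq_rpow]]
      field_simp

lemma intHaux (κ ε T : ℝ) (hκ : 0 < κ) (hε : 0 < ε) (hT : 0 < T) :
    IntervalIntegrable (Haux κ ε T) volume 0 T := by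
  have hmeas := Haux_meas κ ε T
  set C1 : ℝ := (1/ε) * 1 * (1 / Real.sqrt (1 - Real.exp (-κ*T/ε))) *
      (1 / Real.sqrt (2*κ*(Real.exp (-κ*T/ε))^2/ε)) with hC1
  set C2 : ℝ := (1/ε) * 1 * (1 / Real.sqrt (2*κ*(Real.exp (-κ*T/ε))^2/ε)) *
      (1 / Real.sqrt (1 - Real.exp (-κ*T/ε))) with hC2
  have hC1n : 0 ≤ C1 := by rw [hC1]; positivity
  have hC2n : 0 ≤ C2 := by rw [hC2]; positivity
  have half1 : IntervalIntegrable (Haux κ ε T) volume 0 (T/2) := by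
    have i1 : IntervalIntegrable (fun x : ℝ => C1 * x ^ (-(1/2) : ℝ)) volume 0 (T/2) :=
      (intervalIntegral.intervalIntegrable_rpow' (by norm_num)).const_mul C1
    apply i1.mono_fun hmeas.aestronglyMeasurable
    rw [Set.uIoc_of_le (by positivity : (0:ℝ) ≤ T/2)]
    filter_upwards [ae_restrict_mem measurableSet_Ioc] with x hx
    rw [Real.norm_eq_abs, Real.norm_eq_abs, abs_of_nonneg (Haux_nonneg κ ε T x hε),
      abs_of_nonneg (mul_nonneg hC1n (Real.rpow_nonneg hx.1.le _))]
    exact Haux_bound_left κ ε T hκ hε hT hx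
  have half2 : IntervalIntegrable (Haux κ ε T) volume (T/2) T := by
    have i0 : IntervalIntegrable (fun x : ℝ => x ^ (-(1/2) : ℝ)) volume 0 (T/2) :=
      intervalIntegral.intervalIntegrable_rpow' (by norm_num)
    have i1 : IntervalIntegrable (fun x : ℝ => C2 * (T - x) ^ (-(1/2) : ℝ)) volume (T/2) T := by
      have h2 := (i0.comp_sub_left T).const_mul C2
      simpa [show T - T/2 = T/2 by ring] using h2.symm
    apply i1.mono_fun hmeas.aestronglyMeasurable
    rw [Set.uIoc_of_le (by linarith : T/2 ≤ T)]
    have hTne : ∀ᵐ x ∂(volume.restrict (Set.Ioc (T/2) T)), x ≠ T := by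
      refine (ae_restrict_of_ae ?_)
      have h := measure_eq_zero_iff_ae_notMem.1 (Real.volume_singleton (a := T))
      filter_upwards [h] with x hx using by simpa using hx
    filter_upwards [ae_restrict_mem measurableSet_Ioc, hTne] with x hx hxT
    have hx' : x ∈ Set.Ico (T/2) T := ⟨hx.1.le, lt_of_le_of_ne hx.2 hxT⟩
    rw [Real.norm_eq_abs, Real.norm_eq_abs, abs_of_nonneg (Haux_nonneg κ ε T x hε),
      abs_of_nonneg (mul_nonneg hC2n (Real.rpow_nonneg (by linarith [hx'.2] : (0:ℝ) ≤ T - x) _))]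
    exact Haux_bound_right κ ε T hκ hε hT hx'
  exact half1.trans half2

lemma oneD (κ ε T : ℝ) (hκ : 0 < κ) (hε : 0 < ε) (hT : 0 < T) :
    ∫ x in (0:ℝ)..T, Haux κ ε T x = Real.pi / (2*κ) * Real.exp (-κ*T/ε) := by
  have hcont : Continuous (Faux κ ε T) := by
    unfold Faux
    have c1 : Continuous fun y : ℝ => (2 * Real.exp (-2*κ*y/ε) -
        (1 + (Real.exp (-κ*T/ε))^2)) / (1 - (Real.exp (-κ*T/ε))^2) := by fun_prop
    exact continuous_const.mul (Real.continuous_arcsin.comp c1)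
  rw [intervalIntegral.integral_eq_sub_of_hasDeriv_right_of_le hT.le hcont.continuousOn
    (fun x hx => (Faux_deriv κ ε T hκ hε hT hx).hasDerivWithinAt) (intHaux κ ε T hκ hε hT)]
  set φ := Real.exp (-κ*T/ε) with hφdef
  have hφ0 : 0 < φ := Real.exp_pos _
  have hφ1 : φ < 1 := by
    rw [hφdef, Real.exp_lt_one_iff, neg_mul, neg_div]
    have : 0 < κ * T / ε := by positivity
    linarith
  have h1φ2 : (1:ℝ) - φ^2 ≠ 0 := by nlinarith
  have hφ2 : Real.exp (-2 * κ * T / ε) = φ^2 := by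
    rw [hφdef, sq, ← Real.exp_add]; congr 1; ring
  have h0 : Real.exp (-2 * κ * 0 / ε) = 1 := by simp
  unfold Faux
  rw [← hφdef, hφ2, h0,
    show (2*φ^2 - (1+φ^2))/(1-φ^2) = -1 by field_simp; ring,
    show (2*1 - (1+φ^2))/(1-φ^2) = 1 by rw [show (2*1 - (1+φ^2)) = 1-φ^2 by ring, div_self h1φ2],
    Real.arcsin_neg_one, Real.arcsin_one]
  field_simp
  ring

lemma mapMeasure (s t : ℝ) (hst : s ≤ t) (a : ℝ → ℝ) (hmeas : Measurable a)
    (h0 : ∀ u, 0 ≤ a u) (hint : Integrable a) :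
    Measure.map (fun u => ∫ r in s..u, a r)
        ((volume.restrict (Set.Ioc s t)).withDensity (fun u => ENNReal.ofReal (a u)))
      = volume.restrict (Set.Ioc 0 (∫ r in s..t, a r)) := by
  have hAcont : Continuous (fun u => ∫ r in s..u, a r) :=
    intervalIntegral.continuous_primitive (fun u v => hint.intervalIntegrable) s
  have hAnn : ∀ u v, u ≤ v → (0:ℝ) ≤ ∫ r in u..v, a r :=
    fun u v huv => intervalIntegral.integral_nonneg huv (fun x _ => h0 x)
  have hAmono : Monotone (fun u => ∫ r in s..u, a r) := by
    intro u v huv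
    have h := intervalIntegral.integral_interval_sub_left
      (hint.intervalIntegrable (a := s) (b := v)) (hint.intervalIntegrable (a := s) (b := u))
    have h2 := hAnn u v huv
    simp only []
    linarith
  haveI : IsFiniteMeasure
      ((volume.restrict (Set.Ioc s t)).withDensity (fun u => ENNReal.ofReal (a u))) := by
    constructor
    rw [withDensity_apply _ MeasurableSet.univ, Measure.restrict_univ]
    calc ∫⁻ u, ENNReal.ofReal (a u) ∂(volume.restrict (Set.Ioc s t))
        ≤ ∫⁻ u, ENNReal.ofReal (a u) ∂volume :=
          lintegral_mono' Measure.restrict_le_self le_rfl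
      _ ≤ ∫⁻ u, ‖a u‖ₑ ∂volume := lintegral_ofReal_le_lintegral_enorm a
      _ < ⊤ := hint.2
  apply Measure.ext_of_Iic
  intro c
  rw [Measure.map_apply hAcont.measurable measurableSet_Iic,
    withDensity_apply _ (hAcont.measurable measurableSet_Iic),
    Measure.restrict_restrict (hAcont.measurable measurableSet_Iic),
    Measure.restrict_apply measurableSet_Iic]
  rcases le_or_gt 0 c with hc | hc
  · -- main case
    set S := {u ∈ Set.Icc s t | (∫ r in s..u, a r) ≤ c} with hSdef
    have hsS : s ∈ S := by
      refine ⟨⟨le_refl s, hst⟩, ?_⟩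
      rw [intervalIntegral.integral_same]
      exact hc
    have hbdd : BddAbove S := ⟨t, fun u hu => hu.1.2⟩
    have hSclosed : IsClosed S := by
      have : S = Set.Icc s t ∩ (fun u => ∫ r in s..u, a r) ⁻¹' Set.Iic c := rfl
      rw [this]
      exact isClosed_Icc.inter (isClosed_Iic.preimage hAcont)
    have hucS : sSup S ∈ S := hSclosed.csSup_mem ⟨s, hsS⟩ hbdd
    set uc := sSup S with hucdef
    have hsuc : s ≤ uc := le_csSup hbdd hsS
    have huct : uc ≤ t := hucS.1.2
    have hAuc : (∫ r in s..uc, a r) ≤ c := hucS.2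
    have hmin : (∫ r in s..uc, a r) = min c (∫ r in s..t, a r) := by
      rcases le_or_gt (∫ r in s..t, a r) c with hTc | hcT
      · have htS : t ∈ S := ⟨⟨hst, le_refl t⟩, hTc⟩
        have huc_t : uc = t := le_antisymm huct (le_csSup hbdd htS)
        rw [huc_t, min_eq_right hTc]
      · have heq : (∫ r in s..uc, a r) = c := by
          by_contra hne'
          have hlt : (∫ r in s..uc, a r) < c := lt_of_le_of_ne hAuc hne'
          have huct' : uc < t := by
            rcases lt_or_eq_of_le huct with h | h
            · exact h
            · exfalso; rw [h] at hlt; linarith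
          have hnb : {u | (∫ r in s..u, a r) < c} ∈ nhds uc :=
            (isOpen_lt hAcont continuous_const).mem_nhds hlt
          have h2 : {u | (∫ r in s..u, a r) < c} ∈ nhdsWithin uc (Set.Ioi uc) :=
            nhdsWithin_le_nhds hnb
          have h3 : Set.Ioo uc t ∈ nhdsWithin uc (Set.Ioi uc) :=
            Ioo_mem_nhdsGT_of_mem ⟨le_refl uc, huct'⟩
          obtain ⟨v, hv1, hv2⟩ := Filter.nonempty_of_mem (Filter.inter_mem h2 h3)
          have hvS : v ∈ S := ⟨⟨le_trans hsuc hv2.1.le, hv2.2.le⟩, hv1.le⟩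
          exact absurd (le_csSup hbdd hvS) (not_le.2 hv2.1)
        rw [heq, min_eq_left hcT.le]
    have hset : (fun u => ∫ r in s..u, a r) ⁻¹' (Set.Iic c) ∩ Set.Ioc s t = Set.Ioc s uc := by
      ext u
      simp only [Set.mem_inter_iff, Set.mem_preimage, Set.mem_Iic, Set.mem_Ioc]
      constructor
      · rintro ⟨hu1, hu2, hu3⟩
        exact ⟨hu2, le_csSup hbdd ⟨⟨hu2.le, hu3⟩, hu1⟩⟩
      · rintro ⟨hu1, hu2⟩
        exact ⟨le_trans (hAmono hu2) hAuc, hu1, le_trans hu2 huct⟩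
    rw [hset, ← ofReal_integral_eq_lintegral_ofReal
      (hint.integrableOn) (Filter.Eventually.of_forall fun u => h0 u),
      ← intervalIntegral.integral_of_le hsuc, hmin]
    rw [Set.inter_comm, Set.Ioc_inter_Iic, Real.volume_Ioc, sub_zero, min_comm]
  · -- c < 0 : both sides vanish
    have hset : (fun u => ∫ r in s..u, a r) ⁻¹' (Set.Iic c) ∩ Set.Ioc s t = ∅ := by
      ext u
      simp only [Set.mem_inter_iff, Set.mem_preimage, Set.mem_Iic, Set.mem_Ioc,
        Set.mem_empty_iff_false, iff_false, not_and]
      intro hu1 hu2 hu3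
      have := hAnn s u hu2.le
      linarith
    have hset2 : Set.Iic c ∩ Set.Ioc 0 (∫ r in s..t, a r) = ∅ := by
      ext x
      simp only [Set.mem_inter_iff, Set.mem_Iic, Set.mem_Ioc, Set.mem_empty_iff_false,
        iff_false, not_and]
      intro hx1 hx2 hx3
      linarith
    rw [hset, hset2]
    simp

lemma key (s t κ ε : ℝ) (hst : s ≤ t) (hκ : 0 < κ) (hε : 0 < ε)
    (a : ℝ → ℝ) (hmeas : Measurable a) (h0 : ∀ u, 0 ≤ a u) (hint : Integrable a)
    (hα : 0 < ∫ r in s..t, a r) :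
    (∫ u in s..t, (a u / ε) * Real.exp (-κ * (∫ r in s..u, a r) / ε) *
        (Real.exp (-κ * (∫ r in u..t, a r) / ε)
          / Real.sqrt (1 - Real.exp (-2 * κ * (∫ r in u..t, a r) / ε))) *
        (Real.exp (-κ * (∫ r in s..u, a r) / ε)
          / Real.sqrt (1 - Real.exp (-2 * κ * (∫ r in s..u, a r) / ε))))
      = Real.pi / (2 * κ) * Real.exp (-κ * (∫ r in s..t, a r) / ε) := by
  rw [intervalIntegral.integral_of_le hst]
  have hstep : Set.EqOn (fun u => (a u / ε) * Real.exp (-κ * (∫ r in s..u, a r) / ε) *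
        (Real.exp (-κ * (∫ r in u..t, a r) / ε)
          / Real.sqrt (1 - Real.exp (-2 * κ * (∫ r in u..t, a r) / ε))) *
        (Real.exp (-κ * (∫ r in s..u, a r) / ε)
          / Real.sqrt (1 - Real.exp (-2 * κ * (∫ r in s..u, a r) / ε))))
      (fun u => a u * Haux κ ε (∫ r in s..t, a r) (∫ r in s..u, a r)) (Set.Ioc s t) := by
    intro u _
    have h := intervalIntegral.integral_interval_sub_left
      (hint.intervalIntegrable (a := s) (b := t)) (hint.intervalIntegrable (a := s) (b := u))
    have hsub : (∫ r in u..t, a r) = (∫ r in s..t, a r) - ∫ r in s..u, a r := by linarith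
    simp only [hsub]
    unfold Haux
    ring
  rw [MeasureTheory.setIntegral_congr_fun measurableSet_Ioc hstep]
  have hAmeas : Measurable (fun u => ∫ r in s..u, a r) :=
    (intervalIntegral.continuous_primitive (fun u v => hint.intervalIntegrable) s).measurable
  have hHmeas : Measurable (Haux κ ε (∫ r in s..t, a r)) := Haux_meas κ ε _
  calc ∫ u in Set.Ioc s t, a u * Haux κ ε (∫ r in s..t, a r) (∫ r in s..u, a r)
      = ∫ u, ((a u).toNNReal : ℝ≥0) • Haux κ ε (∫ r in s..t, a r) (∫ r in s..u, a r)
          ∂(volume.restrict (Set.Ioc s t)) := by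
        apply integral_congr_ae
        apply Filter.Eventually.of_forall
        intro u
        simp only [NNReal.smul_def, Real.coe_toNNReal _ (h0 u), smul_eq_mul]
    _ = ∫ u, Haux κ ε (∫ r in s..t, a r) (∫ r in s..u, a r)
          ∂((volume.restrict (Set.Ioc s t)).withDensity
            (fun u => (((a u).toNNReal : ℝ≥0) : ℝ≥0∞))) :=
        (integral_withDensity_eq_integral_smul hmeas.real_toNNReal _).symm
    _ = ∫ x, Haux κ ε (∫ r in s..t, a r) x
          ∂(Measure.map (fun u => ∫ r in s..u, a r)
            ((volume.restrict (Set.Ioc s t)).withDensity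
              (fun u => ENNReal.ofReal (a u)))) := by
        rw [integral_map hAmeas.aemeasurable hHmeas.aestronglyMeasurable]
        rfl
    _ = ∫ x in Set.Ioc 0 (∫ r in s..t, a r), Haux κ ε (∫ r in s..t, a r) x := by
        rw [mapMeasure s t hst a hmeas h0 hint]
    _ = ∫ x in (0:ℝ)..(∫ r in s..t, a r), Haux κ ε (∫ r in s..t, a r) x :=
        (intervalIntegral.integral_of_le hα.le).symm
    _ = Real.pi / (2 * κ) * Real.exp (-κ * (∫ r in s..t, a r) / ε) :=
        oneD κ ε _ hκ hε hα

/-- Identity (5.47):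
`∫_s^t (a(u)/ε) e^{-κα(u,s)/ε} g(t,u) g(u,s) du = (π/(2κ)) φ`,
with `g(v,w) = e^{-κα(v,w)/ε}(1-e^{-2κα(v,w)/ε})^{-1/2}` and `φ = e^{-κα(t,s)/ε}`. -/
theorem stmt12 (s t κ ε : ℝ) (hst : s ≤ t) (hκ : 0 < κ) (hε : 0 < ε)
    (a : ℝ → ℝ) (hanneg : ∀ u ∈ Set.Icc s t, 0 ≤ a u)
    (hint : IntervalIntegrable a volume s t)
    (hα : 0 < ∫ r in s..t, a r) :
    (∫ u in s..t, (a u / ε) * Real.exp (-κ * (∫ r in s..u, a r) / ε) *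
        (Real.exp (-κ * (∫ r in u..t, a r) / ε)
          / Real.sqrt (1 - Real.exp (-2 * κ * (∫ r in u..t, a r) / ε))) *
        (Real.exp (-κ * (∫ r in s..u, a r) / ε)
          / Real.sqrt (1 - Real.exp (-2 * κ * (∫ r in s..u, a r) / ε))))
      = Real.pi / (2 * κ) * Real.exp (-κ * (∫ r in s..t, a r) / ε) := by
  have h1 : IntegrableOn a (Set.Icc s t) :=
    (intervalIntegrable_iff_integrableOn_Icc_of_le hst).1 hint
  obtain ⟨b, hb1, hb2⟩ := h1.aestronglyMeasurable
  set abar : ℝ → ℝ := (Set.Icc s t).indicator (fun u => max (b u) 0) with habar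
  have habarmeas : Measurable abar :=
    (Measurable.max hb1.measurable measurable_const).indicator measurableSet_Icc
  have habar0 : ∀ u, 0 ≤ abar u :=
    Set.indicator_nonneg (fun u _ => le_max_right _ _)
  have hae : a =ᵐ[volume.restrict (Set.Icc s t)] abar := by
    filter_upwards [hb2, ae_restrict_mem measurableSet_Icc] with u h2 h3
    rw [habar, Set.indicator_of_mem h3, ← h2, max_eq_left (hanneg u h3)]
  have habarint : Integrable abar volume := by
    rw [habar, integrable_indicator_iff measurableSet_Icc]
    apply h1.congr
    filter_upwards [hb2, ae_restrict_mem measurableSet_Icc] with u h2 h3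
    rw [← h2]
    exact (max_eq_left (hanneg u h3)).symm
  have haeIcc : ∀ᵐ u ∂volume, u ∈ Set.Icc s t → a u = abar u :=
    (ae_restrict_iff' measurableSet_Icc).1 hae
  have hsubset : ∀ u v, u ∈ Set.Icc s t → v ∈ Set.Icc s t →
      Set.uIoc u v ⊆ Set.Icc s t := by
    intro u v hu hv x hx
    rcases Set.mem_uIoc.1 hx with ⟨hx1, hx2⟩ | ⟨hx1, hx2⟩
    · exact ⟨le_trans hu.1 hx1.le, le_trans hx2 hv.2⟩
    · exact ⟨le_trans hv.1 hx1.le, le_trans hx2 hu.2⟩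
  have hinner : ∀ u v, u ∈ Set.Icc s t → v ∈ Set.Icc s t →
      (∫ r in u..v, a r) = ∫ r in u..v, abar r := by
    intro u v hu hv
    apply intervalIntegral.integral_congr_ae
    filter_upwards [haeIcc] with x hx hxuv
    exact hx (hsubset u v hu hv hxuv)
  have hsmem : s ∈ Set.Icc s t := ⟨le_refl s, hst⟩
  have htmem : t ∈ Set.Icc s t := ⟨hst, le_refl t⟩
  have hTeq : (∫ r in s..t, a r) = ∫ r in s..t, abar r := hinner s t hsmem htmem
  have hgoal : (∫ u in s..t, (a u / ε) * Real.exp (-κ * (∫ r in s..u, a r) / ε) *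
        (Real.exp (-κ * (∫ r in u..t, a r) / ε)
          / Real.sqrt (1 - Real.exp (-2 * κ * (∫ r in u..t, a r) / ε))) *
        (Real.exp (-κ * (∫ r in s..u, a r) / ε)
          / Real.sqrt (1 - Real.exp (-2 * κ * (∫ r in s..u, a r) / ε))))
      = ∫ u in s..t, (abar u / ε) * Real.exp (-κ * (∫ r in s..u, abar r) / ε) *
        (Real.exp (-κ * (∫ r in u..t, abar r) / ε)
          / Real.sqrt (1 - Real.exp (-2 * κ * (∫ r in u..t, abar r) / ε))) *
        (Real.exp (-κ * (∫ r in s..u, abar r) / ε)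
          / Real.sqrt (1 - Real.exp (-2 * κ * (∫ r in s..u, abar r) / ε))) := by
    apply intervalIntegral.integral_congr_ae
    filter_upwards [haeIcc] with u hu hmem
    rw [Set.uIoc_of_le hst] at hmem
    have humem : u ∈ Set.Icc s t := ⟨hmem.1.le, hmem.2⟩
    rw [hinner s u hsmem humem, hinner u t humem htmem, hu humem]
  rw [hgoal, hTeq]
  exact key s t κ ε hst hκ hε abar habarmeas habar0 habarint (hTeq ▸ hα)
end

section
/- With a ≥ 0 integrable on [s,t], α(u,s) = ∫_s^u a, κ, ε > 0, g(t,u) = e^{−κα(t,u)/ε}/√(1−e^{−2κα(t,u)/ε}), and φ = e^{−κα(t,s)/ε} ∈ (0,1): ∫_s^t (a(u)/ε) e^{−κα(u,s)/ε} g(t,u) du ≤ (φ/κ) log(2/φ) ≤ (1/κ + α(t,s)/ε) e^{−κα(t,s)/ε}. -/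
open Real MeasureTheory Set



noncomputable def g13 (κ ε B v : ℝ) : ℝ :=
  Real.exp (-κ * B / ε) / ε / Real.sqrt (1 - Real.exp (-2 * κ * (B - v) / ε))

lemma g13_nonneg (κ ε B : ℝ) (hε : 0 < ε) (v : ℝ) : 0 ≤ g13 κ ε B v := by
  unfold g13
  positivity

lemma g13_B (κ ε B : ℝ) : g13 κ ε B B = 0 := by
  unfold g13
  simp

lemma g13_measurable (κ ε B : ℝ) : Measurable (g13 κ ε B) := by
  unfold g13
  apply Measurable.div measurable_const
  exact (Real.continuous_sqrt.comp (continuous_const.sub (Real.continuous_exp.comp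
    (by continuity)))).measurable

lemma g13_sqrt_pos (κ ε B : ℝ) (hκ : 0 < κ) (hε : 0 < ε) {v : ℝ} (hv : v < B) :
    0 < Real.sqrt (1 - Real.exp (-2 * κ * (B - v) / ε)) := by
  apply Real.sqrt_pos.2
  have : Real.exp (-2 * κ * (B - v) / ε) < 1 := by
    apply Real.exp_lt_one_iff.2
    exact div_neg_of_neg_of_pos (by nlinarith) hε
  linarith

lemma g13_mono (κ ε B : ℝ) (hκ : 0 < κ) (hε : 0 < ε) :
    MonotoneOn (g13 κ ε B) (Ico 0 B) := by
  intro v₁ h₁ v₂ h₂ h12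
  unfold g13
  apply div_le_div_of_nonneg_left (by positivity) (g13_sqrt_pos κ ε B hκ hε h₂.2)
  apply Real.sqrt_le_sqrt
  have : Real.exp (-2 * κ * (B - v₁) / ε) ≤ Real.exp (-2 * κ * (B - v₂) / ε) := by
    apply Real.exp_le_exp.2
    apply div_le_div_of_nonneg_right (by nlinarith) hε.le |>.trans_eq rfl
  linarith

lemma one_sub_exp_ge (x x₀ : ℝ) (hx : 0 ≤ x) (hxx : x ≤ x₀) :
    x / (1 + x₀) ≤ 1 - Real.exp (-x) := by
  have h1 : 1 + x ≤ Real.exp x := by linarith [Real.add_one_le_exp x]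
  have hx1 : (0:ℝ) < 1 + x := by linarith
  have h2 : Real.exp (-x) ≤ 1 / (1 + x) := by
    rw [Real.exp_neg, inv_eq_one_div]
    exact one_div_le_one_div_of_le hx1 h1
  have h3 : x / (1 + x₀) ≤ x / (1 + x) :=
    div_le_div_of_nonneg_left hx hx1 (by linarith)
  have h4 : x / (1 + x) = 1 - 1 / (1 + x) := by field_simp; ring
  linarith

lemma g13_intervalIntegrable (κ ε B : ℝ) (hκ : 0 < κ) (hε : 0 < ε) (hB : 0 < B) :
    IntervalIntegrable (g13 κ ε B) volume 0 B := by
  set φ := Real.exp (-κ * B / ε) with hφdef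
  have hφ : 0 < φ := Real.exp_pos _
  set q : ℝ := (2 * κ / ε) / (1 + 2 * κ * B / ε) with hqdef
  have hq : 0 < q := by positivity
  set C : ℝ := φ / ε / Real.sqrt q with hCdef
  have hC : 0 < C := by
    have := Real.sqrt_pos.2 hq
    positivity
  -- integrability of the comparison function
  have h0 : IntervalIntegrable (fun v : ℝ => v ^ (-(1/2 : ℝ))) volume 0 B :=
    intervalIntegral.intervalIntegrable_rpow' (by norm_num)
  have h1 : IntervalIntegrable (fun v : ℝ => (B - v) ^ (-(1/2 : ℝ))) volume 0 B := by
    have := (h0.comp_sub_left B)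
    simpa using this.symm
  have h2 : IntervalIntegrable (fun v : ℝ => C * (B - v) ^ (-(1/2 : ℝ))) volume 0 B :=
    h1.const_mul C
  apply h2.mono_fun
  · apply Measurable.aestronglyMeasurable
    apply Measurable.div measurable_const
    exact (Real.continuous_sqrt.comp (continuous_const.sub (Real.continuous_exp.comp
      (by continuity)))).measurable
  · rw [Filter.EventuallyLE, ae_restrict_iff' measurableSet_uIoc]
    apply Filter.Eventually.of_forall
    intro v hv
    rw [Set.uIoc_of_le hB.le] at hv
    have hv0 : 0 < v := hv.1
    have hvB : v ≤ B := hv.2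
    have hBv : 0 ≤ B - v := by linarith
    -- both sides are nonneg; compare the values
    have hgnn : 0 ≤ g13 κ ε B v := by unfold g13; positivity
    have hrnn : 0 ≤ C * (B - v) ^ (-(1/2 : ℝ)) := by positivity
    rw [Real.norm_of_nonneg hgnn, Real.norm_of_nonneg hrnn]
    -- key bound
    have key : Real.sqrt q * Real.sqrt (B - v) ≤
        Real.sqrt (1 - Real.exp (-2 * κ * (B - v) / ε)) := by
      rw [← Real.sqrt_mul hq.le]
      apply Real.sqrt_le_sqrt
      have hx : 0 ≤ 2 * κ * (B - v) / ε := by positivity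
      have hxx : 2 * κ * (B - v) / ε ≤ 2 * κ * B / ε := by
        apply div_le_div_of_nonneg_right ?_ hε.le |>.trans_eq rfl
        nlinarith
      have := one_sub_exp_ge (2 * κ * (B - v) / ε) (2 * κ * B / ε) hx hxx
      have harg : -(2 * κ * (B - v) / ε) = -2 * κ * (B - v) / ε := by ring
      rw [harg] at this
      have heq : q * (B - v) = 2 * κ * (B - v) / ε / (1 + 2 * κ * B / ε) := by
        rw [hqdef]; field_simp
      rw [heq]
      exact this
    rcases lt_or_eq_of_le hvB with hlt | heq
    · have hd : 0 < Real.sqrt (1 - Real.exp (-2 * κ * (B - v) / ε)) := by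
        apply Real.sqrt_pos.2
        have : Real.exp (-2 * κ * (B - v) / ε) < 1 := by
          apply Real.exp_lt_one_iff.2
          exact div_neg_of_neg_of_pos (by nlinarith) hε
        linarith
      have hsq : 0 < Real.sqrt (B - v) := Real.sqrt_pos.2 (by linarith)
      unfold g13
      rw [Real.rpow_neg hBv, ← Real.sqrt_eq_rpow]
      rw [div_le_iff₀ hd]
      calc φ / ε = (C * (Real.sqrt (B - v))⁻¹) * (Real.sqrt q * Real.sqrt (B - v)) := by
            rw [hCdef]
            field_simp
        _ ≤ (C * (Real.sqrt (B - v))⁻¹) * Real.sqrt (1 - Real.exp (-2 * κ * (B - v) / ε)) := by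
            apply mul_le_mul_of_nonneg_left key (by positivity)
    · subst heq
      unfold g13
      simp

lemma g13_integral_le (κ ε B : ℝ) (hκ : 0 < κ) (hε : 0 < ε) (hB : 0 < B)
    (hgint : IntervalIntegrable (g13 κ ε B) volume 0 B) :
    ∫ v in (0:ℝ)..B, g13 κ ε B v
      ≤ Real.exp (-κ * B / ε) / κ * Real.log (2 / Real.exp (-κ * B / ε)) := by
  set φ := Real.exp (-κ * B / ε) with hφdef
  have hφ : 0 < φ := Real.exp_pos _
  set X : ℝ → ℝ := fun v => Real.sqrt (1 - Real.exp (-2 * κ * (B - v) / ε)) with hXdef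
  set F : ℝ → ℝ := fun v => φ / (2 * κ) * Real.log ((1 - X v) / (1 + X v)) with hFdef
  have hXcont : Continuous X := by
    apply Real.continuous_sqrt.comp
    exact continuous_const.sub (Real.continuous_exp.comp (by continuity))
  have hXnn : ∀ v, 0 ≤ X v := fun v => Real.sqrt_nonneg _
  have hXlt1 : ∀ v, X v < 1 := by
    intro v
    have he : 0 < Real.exp (-2 * κ * (B - v) / ε) := Real.exp_pos _
    rw [hXdef]
    simp only
    rw [Real.sqrt_lt' one_pos]
    nlinarith
  have hXB : X B = 0 := by rw [hXdef]; simp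
  -- derivative of F on the interior
  have hderiv : ∀ v ∈ Ioo (0:ℝ) B, HasDerivAt F (g13 κ ε B v) v := by
    intro v hv
    have hvB : v < B := hv.2
    set e := Real.exp (-2 * κ * (B - v) / ε) with hedef
    have he0 : 0 < e := Real.exp_pos _
    have he1 : e < 1 := by
      apply Real.exp_lt_one_iff.2
      exact div_neg_of_neg_of_pos (by nlinarith) hε
    have hXpos : 0 < X v := Real.sqrt_pos.2 (by rw [← hedef]; linarith)
    have hXv1 : X v < 1 := hXlt1 v
    have hx2 : X v * X v = 1 - e := Real.mul_self_sqrt (by linarith)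
    have h1 : HasDerivAt (fun v : ℝ => -2 * κ * (B - v) / ε) (2 * κ / ε) v := by
      have hb : HasDerivAt (fun v : ℝ => B - v) (-1) v := (hasDerivAt_id v).const_sub B
      have := (hb.const_mul (-2 * κ)).div_const ε
      exact this.congr_deriv (by ring)
    have h2 := h1.exp
    have h3 : HasDerivAt (fun w => 1 - Real.exp (-2 * κ * (B - w) / ε))
        (-(e * (2 * κ / ε))) v := h2.const_sub 1
    have h4 : HasDerivAt X (-(e * (2 * κ / ε)) / (2 * X v)) v :=
      h3.sqrt (by rw [← hedef]; intro h; linarith)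
    set x' := -(e * (2 * κ / ε)) / (2 * X v) with hx'def
    have h5 : HasDerivAt (fun w => 1 - X w) (-x') v := h4.const_sub 1
    have h6 : HasDerivAt (fun w => 1 + X w) x' v := h4.const_add 1
    have hden : (1 + X v) ≠ 0 := by linarith [hXnn v]
    have h7 := h5.div h6 hden
    have hRpos : 0 < (1 - X v) / (1 + X v) := by
      apply div_pos (by linarith) (by linarith [hXnn v])
    have h8 := h7.log (ne_of_gt hRpos)
    have h9 := h8.const_mul (φ / (2 * κ))
    refine h9.congr_deriv ?_
    symm
    have hXe : Real.sqrt (1 - e) = X v := by rw [hedef]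
    unfold g13
    rw [← hedef, ← hφdef, hXe, hx'def]
    have hXne : X v ≠ 0 := ne_of_gt hXpos
    have h1mx : (1 - X v) ≠ 0 := by intro h; nlinarith
    have hene : e ≠ 0 := ne_of_gt he0
    simp only [Pi.div_apply]
    field_simp
    ring_nf
    linear_combination (-2) * hx2
  -- endpoint limits and conclusion
  have hRcont : ∀ w, ContinuousAt (fun u => (1 - X u) / (1 + X u)) w := by
    intro w
    exact ContinuousAt.div (continuous_const.sub hXcont).continuousAt
      (continuous_const.add hXcont).continuousAt (by intro h; nlinarith [hXnn w])
  have hFcontAt : ∀ w, ContinuousAt F w := by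
    intro w
    have hRpos : 0 < (1 - X w) / (1 + X w) :=
      div_pos (by linarith [hXlt1 w]) (by linarith [hXnn w])
    exact continuousAt_const.mul ((hRcont w).log (ne_of_gt hRpos))
  have hFB : Filter.Tendsto F (nhdsWithin B (Set.Iio B)) (nhds 0) := by
    have hFBval : F B = 0 := by rw [hFdef]; simp [hXB]
    have := (hFcontAt B).tendsto.mono_left (nhdsWithin_le_nhds (s := Set.Iio B))
    rwa [hFBval] at this
  have hF0 : Filter.Tendsto F (nhdsWithin 0 (Set.Ioi 0)) (nhds (F 0)) :=
    (hFcontAt 0).tendsto.mono_left (nhdsWithin_le_nhds (s := Set.Ioi 0))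
  have hval : ∫ v in (0:ℝ)..B, g13 κ ε B v = 0 - F 0 :=
    intervalIntegral.integral_eq_sub_of_hasDerivAt_of_tendsto hB hderiv hgint hF0 hFB
  rw [hval]
  set x0 := X 0 with hx0def
  have hx0lt : x0 < 1 := hXlt1 0
  have hx0nn : 0 ≤ x0 := hXnn 0
  have h1mx : 0 < 1 - x0 := by linarith
  have h1px : 0 < 1 + x0 := by linarith
  have hφ2 : φ ^ 2 = Real.exp (-2 * κ * (B - 0) / ε) := by
    have h := Real.exp_add (-κ * B / ε) (-κ * B / ε)
    rw [hφdef, sq, ← h]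
    congr 1
    ring
  have hx02 : x0 * x0 = 1 - φ ^ 2 := by
    rw [hx0def, hXdef]
    simp only
    rw [Real.mul_self_sqrt]
    · rw [hφ2]
    · rw [← hφ2]
      have hφ1 : φ ≤ 1 := Real.exp_le_one_iff.2 (by
        rw [neg_mul, neg_div]
        simp only [Left.neg_nonpos_iff]
        positivity)
      nlinarith [hφ, hφ1]
  have hF0val : 0 - F 0 = φ / (2 * κ) * Real.log ((1 + x0) / (1 - x0)) := by
    rw [hFdef]
    simp only
    rw [zero_sub, ← mul_neg, ← Real.log_inv, inv_div]
  rw [hF0val]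
  have hlog : Real.log ((1 + x0) / (1 - x0)) ≤ 2 * Real.log (2 / φ) := by
    have hgt : (1 + x0) / (1 - x0) ≤ (2 / φ) ^ 2 := by
      rw [div_pow, div_le_div_iff₀ h1mx (by positivity)]
      nlinarith [hx02, sq_nonneg (1 - x0), hx0nn, hx0lt]
    calc Real.log ((1 + x0) / (1 - x0)) ≤ Real.log ((2 / φ) ^ 2) :=
          Real.log_le_log (by positivity) hgt
      _ = 2 * Real.log (2 / φ) := by rw [Real.log_pow]; norm_num
  calc φ / (2 * κ) * Real.log ((1 + x0) / (1 - x0))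
      ≤ φ / (2 * κ) * (2 * Real.log (2 / φ)) :=
        mul_le_mul_of_nonneg_left hlog (by positivity)
    _ = φ / κ * Real.log (2 / φ) := by field_simp

noncomputable def A13 (s t : ℝ) (a : ℝ → ℝ) (u : ℝ) : ℝ :=
  ∫ r in s..(max s (min u t)), a r

lemma clamp_mem (s t u : ℝ) (hst : s ≤ t) : max s (min u t) ∈ Set.Icc s t :=
  ⟨le_max_left _ _, max_le hst (min_le_right _ _)⟩

lemma clamp_eq {s t u : ℝ} (hu : u ∈ Set.Icc s t) : max s (min u t) = u := by
  rw [min_eq_left hu.2, max_eq_right hu.1]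

lemma A13_continuous (s t : ℝ) (hst : s ≤ t) (a : ℝ → ℝ)
    (hint : IntervalIntegrable a volume s t) : Continuous (A13 s t a) := by
  have hprim : ContinuousOn (fun x => ∫ r in s..x, a r) (Set.uIcc s t) :=
    intervalIntegral.continuousOn_primitive_interval' hint left_mem_uIcc
  have hclamp : Continuous (fun u : ℝ => max s (min u t)) :=
    continuous_const.max (continuous_id.min continuous_const)
  exact hprim.comp_continuous hclamp
    (fun u => by rw [Set.uIcc_of_le hst]; exact clamp_mem s t u hst)

lemma A13_eq {s t : ℝ} (a : ℝ → ℝ) {u : ℝ} (hu : u ∈ Set.Icc s t) :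
    A13 s t a u = ∫ r in s..u, a r := by
  unfold A13
  rw [clamp_eq hu]

lemma integral_sub_integral (s t : ℝ) (a : ℝ → ℝ)
    (hint : IntervalIntegrable a volume s t) {w : ℝ} (hw : w ∈ Set.Icc s t) :
    ∫ r in w..t, a r = (∫ r in s..t, a r) - A13 s t a w := by
  rw [A13_eq a hw]
  have h1 : IntervalIntegrable a volume s w :=
    hint.mono_set (Set.uIcc_subset_uIcc left_mem_uIcc
      (by rw [Set.uIcc_of_le (hw.1.trans hw.2)]; exact hw))
  have h2 : IntervalIntegrable a volume w t :=
    hint.mono_set (Set.uIcc_subset_uIcc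
      (by rw [Set.uIcc_of_le (hw.1.trans hw.2)]; exact hw) right_mem_uIcc)
  have := intervalIntegral.integral_add_adjacent_intervals h1 h2
  linarith

lemma A13_monotone (s t : ℝ) (hst : s ≤ t) (a : ℝ → ℝ)
    (hanneg : ∀ u ∈ Set.Icc s t, 0 ≤ a u)
    (hint : IntervalIntegrable a volume s t) : Monotone (A13 s t a) := by
  intro u v huv
  unfold A13
  set x := max s (min u t) with hx
  set y := max s (min v t) with hy
  have hxy : x ≤ y := max_le_max le_rfl (min_le_min huv le_rfl)
  have hxm : x ∈ Set.Icc s t := clamp_mem s t u hst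
  have hym : y ∈ Set.Icc s t := clamp_mem s t v hst
  have h1 : IntervalIntegrable a volume s x :=
    hint.mono_set (Set.uIcc_subset_uIcc left_mem_uIcc
      (by rw [Set.uIcc_of_le hst]; exact hxm))
  have h2 : IntervalIntegrable a volume x y :=
    hint.mono_set (Set.uIcc_subset_uIcc
      (by rw [Set.uIcc_of_le hst]; exact hxm)
      (by rw [Set.uIcc_of_le hst]; exact hym))
  have hadd := intervalIntegral.integral_add_adjacent_intervals h1 h2
  have hnn : 0 ≤ ∫ r in x..y, a r := by
    apply intervalIntegral.integral_nonneg hxy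
    intro r hr
    exact hanneg r ⟨hxm.1.trans hr.1, hr.2.trans hym.2⟩
  linarith

lemma A13_clamp (s t : ℝ) (hst : s ≤ t) (a : ℝ → ℝ) (u : ℝ) :
    A13 s t a u = A13 s t a (max s (min u t)) := by
  conv_rhs => unfold A13
  rw [clamp_eq (clamp_mem s t u hst)]
  rfl

lemma A13_s (s t : ℝ) (hst : s ≤ t) (a : ℝ → ℝ) : A13 s t a s = 0 := by
  rw [A13_eq a (Set.left_mem_Icc.2 hst), intervalIntegral.integral_same]

lemma A13_t (s t : ℝ) (hst : s ≤ t) (a : ℝ → ℝ) :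
    A13 s t a t = ∫ r in s..t, a r := A13_eq a (Set.right_mem_Icc.2 hst)

lemma A13_nonneg (s t : ℝ) (hst : s ≤ t) (a : ℝ → ℝ)
    (hanneg : ∀ u ∈ Set.Icc s t, 0 ≤ a u)
    (hint : IntervalIntegrable a volume s t) (u : ℝ) : 0 ≤ A13 s t a u := by
  rw [A13_clamp s t hst a u, ← A13_s s t hst a]
  exact A13_monotone s t hst a hanneg hint (le_max_left _ _)

lemma A13_le (s t : ℝ) (hst : s ≤ t) (a : ℝ → ℝ)
    (hanneg : ∀ u ∈ Set.Icc s t, 0 ≤ a u)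
    (hint : IntervalIntegrable a volume s t) (u : ℝ) :
    A13 s t a u ≤ ∫ r in s..t, a r := by
  rw [A13_clamp s t hst a u, ← A13_t s t hst a]
  exact A13_monotone s t hst a hanneg hint (clamp_mem s t u hst).2

lemma key13 (s t B : ℝ) (hst : s ≤ t) (a am : ℝ → ℝ)
    (hanneg : ∀ u ∈ Set.Icc s t, 0 ≤ a u) (hint : IntervalIntegrable a volume s t)
    (ham : StronglyMeasurable am)
    (hameq : a =ᵐ[volume.restrict (Set.Ioc s t)] am)
    (hB : B = ∫ r in s..t, a r) (hBpos : 0 < B)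
    (g : ℝ → ℝ) (hg0 : ∀ v, 0 ≤ g v) (hgmono : MonotoneOn g (Set.Ico 0 B))
    (hgB : g B = 0) (hgmeas : Measurable g) :
    ∫⁻ u in Set.Ioo s t, ENNReal.ofReal (a u) * ENNReal.ofReal (g (A13 s t a u))
      ≤ ∫⁻ v in Set.Ioo 0 B, ENNReal.ofReal (g v) := by
  have haint : IntegrableOn a (Set.Ioc s t) volume :=
    (intervalIntegrable_iff_integrableOn_Ioc_of_le hst).1 hint
  have hameqIoo : a =ᵐ[volume.restrict (Set.Ioo s t)] am :=
    ae_restrict_of_ae_restrict_of_subset Set.Ioo_subset_Ioc_self hameq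
  have hA13cont : Continuous (A13 s t a) := A13_continuous s t hst a hint
  set μ : Measure ℝ :=
    (volume.restrict (Set.Ioo s t)).withDensity (fun u => ENNReal.ofReal (am u)) with hμdef
  have hammeas : Measurable fun u => ENNReal.ofReal (am u) :=
    ham.measurable.ennreal_ofReal
  have hgA13meas : Measurable fun u => ENNReal.ofReal (g (A13 s t a u)) :=
    (hgmeas.comp hA13cont.measurable).ennreal_ofReal
  -- Step 1: replace a by its measurable version
  have step1 : ∫⁻ u in Set.Ioo s t,
      ENNReal.ofReal (a u) * ENNReal.ofReal (g (A13 s t a u))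
      = ∫⁻ u in Set.Ioo s t,
      ENNReal.ofReal (am u) * ENNReal.ofReal (g (A13 s t a u)) := by
    apply lintegral_congr_ae
    filter_upwards [hameqIoo] with u hu
    rw [hu]
  -- Step 2: withDensity
  have step2 : ∫⁻ u in Set.Ioo s t,
      ENNReal.ofReal (am u) * ENNReal.ofReal (g (A13 s t a u))
      = ∫⁻ u, ENNReal.ofReal (g (A13 s t a u)) ∂μ := by
    rw [hμdef, lintegral_withDensity_eq_lintegral_mul _ hammeas hgA13meas]
    rfl
  -- Step 3: layer cake for the left-hand side
  have step3 : ∫⁻ u, ENNReal.ofReal (g (A13 s t a u)) ∂μ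
      = ∫⁻ y in Set.Ioi (0:ℝ), μ {u | y ≤ g (A13 s t a u)} :=
    lintegral_eq_lintegral_meas_le μ
      (Filter.Eventually.of_forall fun u => hg0 _)
      ((hgmeas.comp hA13cont.measurable).aemeasurable)
  -- Step 5: layer cake for the right-hand side
  have step5 : ∫⁻ v in Set.Ioo 0 B, ENNReal.ofReal (g v)
      = ∫⁻ y in Set.Ioi (0:ℝ), (volume.restrict (Set.Ioo 0 B)) {v | y ≤ g v} :=
    lintegral_eq_lintegral_meas_le _
      (Filter.Eventually.of_forall fun u => hg0 _) hgmeas.aemeasurable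
  -- Step 4: pointwise comparison of measures of level sets
  have step4 : ∀ y : ℝ, 0 < y →
      μ {u | y ≤ g (A13 s t a u)} ≤ (volume.restrict (Set.Ioo 0 B)) {v | y ≤ g v} := by
    intro y hy
    set E := {u | y ≤ g (A13 s t a u)} with hEdef
    have hcompl : μ (Set.Ioo s t)ᶜ = 0 := by
      rw [hμdef, withDensity_apply _ measurableSet_Ioo.compl,
        Measure.restrict_restrict measurableSet_Ioo.compl, Set.compl_inter_self,
        Measure.restrict_empty, lintegral_zero_measure]
    have hEsplit : μ E ≤ μ (E ∩ Set.Ioo s t) + 0 := by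
      calc μ E ≤ μ (E ∩ Set.Ioo s t) + μ (E \ Set.Ioo s t) :=
            le_of_eq (measure_inter_add_diff E measurableSet_Ioo).symm
        _ ≤ μ (E ∩ Set.Ioo s t) + μ (Set.Ioo s t)ᶜ := by
            gcongr
            exact fun u hu => hu.2
        _ = μ (E ∩ Set.Ioo s t) + 0 := by rw [hcompl]
    rw [add_zero] at hEsplit
    set Sy := {v ∈ Set.Ico (0:ℝ) B | y ≤ g v} with hSydef
    by_cases hne : Sy.Nonempty
    · set x := sInf Sy with hxdef
      have hbdd : BddBelow Sy := ⟨0, fun v hv => hv.1.1⟩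
      have hx0 : 0 ≤ x := le_csInf hne fun v hv => hv.1.1
      obtain ⟨v0, hv0⟩ := hne
      have hxB : x < B := lt_of_le_of_lt (csInf_le hbdd hv0) hv0.1.2
      -- u-side bound
      have claimU : E ∩ Set.Ioo s t ⊆ {u | x ≤ A13 s t a u} ∩ Set.Ioo s t := by
        rintro u ⟨huE, huI⟩
        refine ⟨?_, huI⟩
        have hA0 : 0 ≤ A13 s t a u := A13_nonneg s t hst a hanneg hint u
        have hAB : A13 s t a u ≤ B := hB ▸ A13_le s t hst a hanneg hint u
        rcases lt_or_eq_of_le hAB with hlt | heq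
        · exact csInf_le hbdd ⟨⟨hA0, hlt⟩, huE⟩
        · exfalso
          have : y ≤ g B := by rw [← heq]; exact huE
          rw [hgB] at this
          linarith
      -- the sInf w of the set where A13 ≥ x
      set T := Set.Icc s t ∩ {u | x ≤ A13 s t a u} with hTdef
      have hTne : T.Nonempty := ⟨t, Set.right_mem_Icc.2 hst, by
        rw [Set.mem_setOf_eq, A13_t s t hst a, ← hB]; exact hxB.le⟩
      have hTbdd : BddBelow T := ⟨s, fun u hu => hu.1.1⟩
      have hTclosed : IsClosed T :=
        isClosed_Icc.inter (isClosed_le continuous_const hA13cont)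
      set w := sInf T with hwdef
      have hw : w ∈ T := hTclosed.csInf_mem hTne hTbdd
      have hws : s ≤ w := hw.1.1
      have hwt : w ≤ t := hw.1.2
      have hwx : x ≤ A13 s t a w := hw.2
      have hsub : {u | x ≤ A13 s t a u} ∩ Set.Ioo s t ⊆ Set.Ico w t := by
        rintro u ⟨hux, huI⟩
        exact ⟨csInf_le hTbdd ⟨⟨huI.1.le, huI.2.le⟩, hux⟩, huI.2⟩
      have hμw : μ {w} = 0 := by
        rw [hμdef, withDensity_apply _ (measurableSet_singleton w)]
        apply setLIntegral_measure_zero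
        exact le_antisymm ((Measure.restrict_le_self _).trans_eq (Real.volume_singleton))
          bot_le
      have hIoosub : Set.Ioo w t ⊆ Set.Ioo s t := Set.Ioo_subset_Ioo hws le_rfl
      have hμIoo : μ (Set.Ioo w t) ≤ ENNReal.ofReal (B - x) := by
        rw [hμdef, withDensity_apply _ measurableSet_Ioo,
          Measure.restrict_restrict measurableSet_Ioo,
          Set.inter_eq_self_of_subset_left hIoosub]
        have hcongr : ∫⁻ u in Set.Ioo w t, ENNReal.ofReal (am u)
            = ∫⁻ u in Set.Ioo w t, ENNReal.ofReal (a u) := by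
          apply lintegral_congr_ae
          have := ae_restrict_of_ae_restrict_of_subset
            (show Set.Ioo w t ⊆ Set.Ioc s t from fun u hu => ⟨lt_of_le_of_lt hws hu.1, hu.2.le⟩)
            hameq
          filter_upwards [this] with u hu
          rw [hu]
        rw [hcongr]
        have hIntOn : IntegrableOn a (Set.Ioo w t) volume :=
          haint.mono_set fun u hu => ⟨lt_of_le_of_lt hws hu.1, hu.2.le⟩
        have hnnae : 0 ≤ᵐ[volume.restrict (Set.Ioo w t)] a := by
          rw [Filter.EventuallyLE, ae_restrict_iff' measurableSet_Ioo]
          exact Filter.Eventually.of_forall fun u hu =>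
            hanneg u ⟨hws.trans hu.1.le, hu.2.le⟩
        rw [← ofReal_integral_eq_lintegral_ofReal hIntOn hnnae]
        apply ENNReal.ofReal_le_ofReal
        have : ∫ u in Set.Ioo w t, a u = ∫ r in w..t, a r := by
          rw [intervalIntegral.integral_of_le hwt, integral_Ioc_eq_integral_Ioo]
        rw [this, integral_sub_integral s t a hint ⟨hws, hwt⟩, ← hB]
        linarith
      have boundU : μ (E ∩ Set.Ioo s t) ≤ ENNReal.ofReal (B - x) := by
        calc μ (E ∩ Set.Ioo s t) ≤ μ (Set.Ico w t) :=
              measure_mono (claimU.trans hsub)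
          _ ≤ μ {w} + μ (Set.Ioo w t) := by
              apply (measure_mono ?_).trans (measure_union_le _ _)
              intro u hu
              rcases eq_or_lt_of_le hu.1 with h | h
              · exact Or.inl (by simp [← h])
              · exact Or.inr ⟨h, hu.2⟩
          _ = μ (Set.Ioo w t) := by rw [hμw, zero_add]
          _ ≤ ENNReal.ofReal (B - x) := hμIoo
      -- v-side bound
      have boundV : ENNReal.ofReal (B - x)
          ≤ (volume.restrict (Set.Ioo 0 B)) {v | y ≤ g v} := by
        have hsubV : Set.Ioo x B ⊆ {v | y ≤ g v} ∩ Set.Ioo 0 B := by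
          intro v hv
          have hvpos : 0 < v := lt_of_le_of_lt hx0 hv.1
          obtain ⟨z, hz, hzv⟩ := exists_lt_of_csInf_lt ⟨v0, hv0⟩ hv.1
          refine ⟨?_, hvpos, hv.2⟩
          exact hz.2.trans (hgmono hz.1 ⟨hvpos.le, hv.2⟩ hzv.le)
        calc ENNReal.ofReal (B - x) = volume (Set.Ioo x B) := (Real.volume_Ioo).symm
          _ ≤ volume ({v | y ≤ g v} ∩ Set.Ioo 0 B) := measure_mono hsubV
          _ = (volume.restrict (Set.Ioo 0 B)) {v | y ≤ g v} :=
              (Measure.restrict_apply' measurableSet_Ioo).symm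
      exact hEsplit.trans (boundU.trans boundV)
    · -- Sy empty: level set is empty
      have hempty : E ∩ Set.Ioo s t = ∅ := by
        rw [Set.eq_empty_iff_forall_notMem]
        rintro u ⟨huE, huI⟩
        have hA0 : 0 ≤ A13 s t a u := A13_nonneg s t hst a hanneg hint u
        have hAB : A13 s t a u ≤ B := hB ▸ A13_le s t hst a hanneg hint u
        rcases lt_or_eq_of_le hAB with hlt | heq
        · exact hne ⟨A13 s t a u, ⟨hA0, hlt⟩, huE⟩
        · have : y ≤ g B := by rw [← heq]; exact huE
          rw [hgB] at this
          linarith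
      rw [hempty, measure_empty] at hEsplit
      exact hEsplit.trans bot_le
  rw [step1, step2, step3, step5]
  apply lintegral_mono_ae
  filter_upwards [ae_restrict_mem measurableSet_Ioi] with y hy using step4 y hy

lemma stmt13_second (κ ε B : ℝ) (hκ : 0 < κ) (hε : 0 < ε) (hB : 0 < B) :
    (Real.exp (-κ * B / ε) / κ) * Real.log (2 / Real.exp (-κ * B / ε))
      ≤ (1 / κ + B / ε) * Real.exp (-κ * B / ε) := by
  have hφ : 0 < Real.exp (-κ * B / ε) := Real.exp_pos _
  have hlog : Real.log (2 / Real.exp (-κ * B / ε)) = Real.log 2 + κ * B / ε := by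
    rw [Real.log_div (by norm_num) (ne_of_gt hφ), Real.log_exp]
    ring
  rw [hlog]
  have h2 : Real.log 2 ≤ 1 := by
    have := Real.log_two_lt_d9
    linarith
  have hBε : 0 ≤ κ * B / ε := by positivity
  calc Real.exp (-κ * B / ε) / κ * (Real.log 2 + κ * B / ε)
      ≤ Real.exp (-κ * B / ε) / κ * (1 + κ * B / ε) := by
        apply mul_le_mul_of_nonneg_left (by linarith) (by positivity)
    _ = (1 / κ + B / ε) * Real.exp (-κ * B / ε) := by
        field_simp

/-- Estimate (5.48):
`∫_s^t (a(u)/ε) e^{-κα(u,s)/ε} g(t,u) du ≤ (φ/κ) log(2/φ)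
  ≤ (1/κ + α(t,s)/ε) e^{-κα(t,s)/ε}`. -/
theorem stmt13 (s t κ ε : ℝ) (hst : s ≤ t) (hκ : 0 < κ) (hε : 0 < ε)
    (a : ℝ → ℝ) (hanneg : ∀ u ∈ Set.Icc s t, 0 ≤ a u)
    (hint : IntervalIntegrable a volume s t)
    (hα : 0 < ∫ r in s..t, a r) :
    (∫ u in s..t, (a u / ε) * Real.exp (-κ * (∫ r in s..u, a r) / ε) *
        (Real.exp (-κ * (∫ r in u..t, a r) / ε)
          / Real.sqrt (1 - Real.exp (-2 * κ * (∫ r in u..t, a r) / ε))))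
      ≤ (Real.exp (-κ * (∫ r in s..t, a r) / ε) / κ)
          * Real.log (2 / Real.exp (-κ * (∫ r in s..t, a r) / ε))
    ∧ (Real.exp (-κ * (∫ r in s..t, a r) / ε) / κ)
          * Real.log (2 / Real.exp (-κ * (∫ r in s..t, a r) / ε))
      ≤ (1 / κ + (∫ r in s..t, a r) / ε)
          * Real.exp (-κ * (∫ r in s..t, a r) / ε) := by
  set B := ∫ r in s..t, a r with hBdef
  constructor
  swap
  · exact stmt13_second κ ε B hκ hε hα
  -- main inequality
  have haint : IntegrableOn a (Set.Ioc s t) volume :=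
    (intervalIntegrable_iff_integrableOn_Ioc_of_le hst).1 hint
  have hA13cont : Continuous (A13 s t a) := A13_continuous s t hst a hint
  set φ := Real.exp (-κ * B / ε) with hφdef
  have hφ : 0 < φ := Real.exp_pos _
  have hφ1 : φ ≤ 1 := by
    apply Real.exp_le_one_iff.2
    rw [neg_mul, neg_div]
    simp only [Left.neg_nonpos_iff]
    positivity
  have hRHSnn : 0 ≤ φ / κ * Real.log (2 / φ) := by
    apply mul_nonneg (by positivity)
    apply Real.log_nonneg
    rw [le_div_iff₀ hφ]
    linarith
  set fhat : ℝ → ℝ := fun u => a u * g13 κ ε B (A13 s t a u) with hfhatdef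
  have hfhat_meas : AEStronglyMeasurable fhat (volume.restrict (Set.Ioc s t)) :=
    haint.aestronglyMeasurable.mul
      ((g13_measurable κ ε B).comp hA13cont.measurable).aestronglyMeasurable
  have hfhat_nn : 0 ≤ᵐ[volume.restrict (Set.Ioc s t)] fhat := by
    rw [Filter.EventuallyLE, ae_restrict_iff' measurableSet_Ioc]
    apply Filter.Eventually.of_forall
    intro u hu
    exact mul_nonneg (hanneg u ⟨hu.1.le, hu.2⟩) (g13_nonneg κ ε B hε _)
  -- pointwise identification of the integrand
  have key_forall : ∀ u ∈ Set.Ioc s t,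
      (a u / ε) * Real.exp (-κ * (∫ r in s..u, a r) / ε) *
        (Real.exp (-κ * (∫ r in u..t, a r) / ε)
          / Real.sqrt (1 - Real.exp (-2 * κ * (∫ r in u..t, a r) / ε)))
      = fhat u := by
    intro u hu
    have huIcc : u ∈ Set.Icc s t := ⟨hu.1.le, hu.2⟩
    have h1 : (∫ r in s..u, a r) = A13 s t a u := (A13_eq a huIcc).symm
    have h2 : (∫ r in u..t, a r) = B - A13 s t a u :=
      integral_sub_integral s t a hint huIcc
    rw [h1, h2, hfhatdef]
    simp only
    unfold g13
    rw [← hφdef]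
    have he : Real.exp (-κ * A13 s t a u / ε) * Real.exp (-κ * (B - A13 s t a u) / ε)
        = φ := by
      rw [← Real.exp_add, hφdef]
      congr 1
      ring
    calc (a u / ε) * Real.exp (-κ * A13 s t a u / ε) *
          (Real.exp (-κ * (B - A13 s t a u) / ε)
            / Real.sqrt (1 - Real.exp (-2 * κ * (B - A13 s t a u) / ε)))
        = a u * ((Real.exp (-κ * A13 s t a u / ε) * Real.exp (-κ * (B - A13 s t a u) / ε))
            / ε / Real.sqrt (1 - Real.exp (-2 * κ * (B - A13 s t a u) / ε))) := by
          ring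
      _ = a u * (φ / ε / Real.sqrt (1 - Real.exp (-2 * κ * (B - A13 s t a u) / ε))) := by
          rw [he]
  -- rewrite the interval integral
  rw [intervalIntegral.integral_of_le hst]
  rw [setIntegral_congr_fun measurableSet_Ioc key_forall]
  rw [integral_eq_lintegral_of_nonneg_ae hfhat_nn hfhat_meas]
  -- bound the lintegral
  obtain ⟨am, ham, hameq⟩ : ∃ am, StronglyMeasurable am ∧
      a =ᵐ[volume.restrict (Set.Ioc s t)] am :=
    ⟨haint.aestronglyMeasurable.mk a, haint.aestronglyMeasurable.stronglyMeasurable_mk,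
      haint.aestronglyMeasurable.ae_eq_mk⟩
  have hIoo_eq : ∫⁻ u in Set.Ioc s t, ENNReal.ofReal (fhat u)
      = ∫⁻ u in Set.Ioo s t, ENNReal.ofReal (fhat u) := by
    rw [Measure.restrict_congr_set Ioo_ae_eq_Ioc]
  have hof : ∀ u ∈ Set.Ioo s t, ENNReal.ofReal (fhat u)
      = ENNReal.ofReal (a u) * ENNReal.ofReal (g13 κ ε B (A13 s t a u)) := by
    intro u hu
    rw [hfhatdef]
    exact ENNReal.ofReal_mul (hanneg u ⟨hu.1.le, hu.2.le⟩)
  have hgIntOn : IntegrableOn (g13 κ ε B) (Set.Ioo 0 B) volume :=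
    ((intervalIntegrable_iff_integrableOn_Ioc_of_le hα.le).1
      (g13_intervalIntegrable κ ε B hκ hε hα)).mono_set Set.Ioo_subset_Ioc_self
  have hlin : ∫⁻ u in Set.Ioc s t, ENNReal.ofReal (fhat u)
      ≤ ENNReal.ofReal (φ / κ * Real.log (2 / φ)) := by
    rw [hIoo_eq, setLIntegral_congr_fun measurableSet_Ioo
      hof]
    calc ∫⁻ u in Set.Ioo s t,
          ENNReal.ofReal (a u) * ENNReal.ofReal (g13 κ ε B (A13 s t a u))
        ≤ ∫⁻ v in Set.Ioo 0 B, ENNReal.ofReal (g13 κ ε B v) :=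
          key13 s t B hst a am hanneg hint ham hameq hBdef hα (g13 κ ε B)
            (g13_nonneg κ ε B hε) (g13_mono κ ε B hκ hε) (g13_B κ ε B)
            (g13_measurable κ ε B)
      _ = ENNReal.ofReal (∫ v in Set.Ioo 0 B, g13 κ ε B v) := by
          rw [← ofReal_integral_eq_lintegral_ofReal hgIntOn]
          rw [Filter.EventuallyLE, ae_restrict_iff' measurableSet_Ioo]
          exact Filter.Eventually.of_forall fun v _ => g13_nonneg κ ε B hε v
      _ ≤ ENNReal.ofReal (φ / κ * Real.log (2 / φ)) := by
          apply ENNReal.ofReal_le_ofReal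
          have : ∫ v in Set.Ioo 0 B, g13 κ ε B v = ∫ v in (0:ℝ)..B, g13 κ ε B v := by
            rw [intervalIntegral.integral_of_le hα.le, integral_Ioc_eq_integral_Ioo]
          rw [this, hφdef]
          exact g13_integral_le κ ε B hκ hε hα (g13_intervalIntegrable κ ε B hκ hε hα)
  calc (∫⁻ u in Set.Ioc s t, ENNReal.ofReal (fhat u)).toReal
      ≤ (ENNReal.ofReal (φ / κ * Real.log (2 / φ))).toReal :=
        ENNReal.toReal_mono ENNReal.ofReal_ne_top hlin
    _ = φ / κ * Real.log (2 / φ) := ENNReal.toReal_ofReal hRHSnn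
end

section
/- Let a₀ > 0, ε > 0 and τ ≥ √ε, and set ξ = a₀τ²/(4ε) ≥ a₀/4. Then for all t ≥ τ: ∫_τ^t s^{−1/2} e^{−a₀(t²−s²)/(4ε)} ds ≤ (8/a₀) ε t^{−3/2}. -/
open Real MeasureTheory

lemma exp_integral (k d a b : ℝ) (hk : k ≠ 0) :
    ∫ s in a..b, Real.exp (k*s + d) = (Real.exp (k*b+d) - Real.exp (k*a+d))/k := by
  have h : ∀ x ∈ Set.uIcc a b, HasDerivAt (fun s => Real.exp (k*s+d)/k) (Real.exp (k*x+d)) x := by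
    intro x _
    have h1 : HasDerivAt (fun s : ℝ => k*s+d) k x := by
      simpa using ((hasDerivAt_id x).const_mul k).add_const d
    have h3 := h1.exp.div_const k
    refine h3.congr_deriv ?_
    field_simp
  rw [intervalIntegral.integral_eq_sub_of_hasDerivAt h
    ((Real.continuous_exp.comp (by continuity)).intervalIntegrable a b)]
  ring

lemma integrable_invsqrt (a b : ℝ) (ha : 0 < a) (hab : a ≤ b) :
    IntervalIntegrable (fun s => 1/Real.sqrt s) volume a b := by
  apply ContinuousOn.intervalIntegrable
  apply ContinuousOn.div continuousOn_const Real.continuous_sqrt.continuousOn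
  intro x hx
  rw [Set.uIcc_of_le hab] at hx
  have hx0 : 0 < x := lt_of_lt_of_le ha hx.1
  positivity

lemma sqrt_integral (a b : ℝ) (ha : 0 < a) (hab : a ≤ b) :
    ∫ s in a..b, 1/Real.sqrt s = 2*Real.sqrt b - 2*Real.sqrt a := by
  have h : ∀ x ∈ Set.uIcc a b, HasDerivAt (fun s => 2*Real.sqrt s) (1/Real.sqrt x) x := by
    intro x hx
    rw [Set.uIcc_of_le hab] at hx
    have hx0 : 0 < x := lt_of_lt_of_le ha hx.1
    have h2 := (Real.hasDerivAt_sqrt hx0.ne').const_mul 2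
    refine h2.congr_deriv ?_
    have : Real.sqrt x ≠ 0 := by positivity
    field_simp
  rw [intervalIntegral.integral_eq_sub_of_hasDerivAt h (integrable_invsqrt a b ha hab)]

lemma integrable_aux (a b : ℝ) (ha : 0 < a) (hab : a ≤ b) (g : ℝ → ℝ) (hg : Continuous g) :
    IntervalIntegrable (fun s => (1/Real.sqrt s) * Real.exp (g s)) volume a b :=
  (integrable_invsqrt a b ha hab).mul_continuousOn (Real.continuous_exp.comp hg).continuousOn

lemma key_ineq (x : ℝ) (hx : 0 ≤ x) :
    x * Real.exp (-(3/4*x)) + (1 - Real.exp (-(x/2))) ≤ 5/4 := by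
  have hx2 : x ≤ Real.exp (x/2) := by
    have h := Real.add_one_le_exp (x/4)
    have h2 : Real.exp (x/2) = Real.exp (x/4) * Real.exp (x/4) := by
      rw [← Real.exp_add]; ring_nf
    nlinarith [Real.exp_pos (x/4), sq_nonneg (x/4 - 1), h]
  have h3 : x * Real.exp (-(3/4*x)) ≤ Real.exp (-(x/4)) := by
    calc x * Real.exp (-(3/4*x)) ≤ Real.exp (x/2) * Real.exp (-(3/4*x)) :=
          mul_le_mul_of_nonneg_right hx2 (Real.exp_pos _).le
      _ = Real.exp (-(x/4)) := by rw [← Real.exp_add]; ring_nf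
  have h4 : Real.exp (-(x/2)) = Real.exp (-(x/4)) * Real.exp (-(x/4)) := by
    rw [← Real.exp_add]; ring_nf
  nlinarith [sq_nonneg (Real.exp (-(x/4)) - 1/2)]

lemma piece2 (c t a : ℝ) (hc : 0 < c) (ha : 0 < a) (hat : a ≤ t) :
    (∫ s in a..t, (1/Real.sqrt s) * Real.exp (-(c*(t^2 - s^2))))
      ≤ (1/Real.sqrt a) * ((1 - Real.exp (-(c*t*(t-a))))/(c*t)) := by
  have ht0 : 0 < t := ha.trans_le hat
  have hmono : (∫ s in a..t, (1/Real.sqrt s) * Real.exp (-(c*(t^2-s^2))))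
      ≤ ∫ s in a..t, (1/Real.sqrt a) * Real.exp (-(c*t*(t-s))) := by
    apply intervalIntegral.integral_mono_on hat
    · exact integrable_aux a t ha hat _ (by continuity)
    · exact (Continuous.intervalIntegrable (by continuity) a t)
    · intro s hs
      have hs0 : 0 < s := lt_of_lt_of_le ha hs.1
      have h1 : 1/Real.sqrt s ≤ 1/Real.sqrt a :=
        one_div_le_one_div_of_le (Real.sqrt_pos.2 ha) (Real.sqrt_le_sqrt hs.1)
      have h2 : Real.exp (-(c*(t^2-s^2))) ≤ Real.exp (-(c*t*(t-s))) := by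
        apply Real.exp_le_exp.2
        nlinarith [mul_nonneg (mul_nonneg hc.le (sub_nonneg.2 hs.2)) hs0.le]
      exact mul_le_mul h1 h2 (Real.exp_pos _).le (by positivity)
  refine hmono.trans ?_
  rw [intervalIntegral.integral_const_mul]
  apply mul_le_mul_of_nonneg_left ?_ (by positivity)
  have hrw : ∀ s:ℝ, -(c*t*(t-s)) = (c*t)*s + (-(c*t*t)) := fun s => by ring
  simp only [hrw]
  rw [exp_integral (c*t) (-(c*t*t)) a t (by positivity)]
  rw [show c*t*t + -(c*t*t) = 0 by ring, show c*t*a + -(c*t*t) = -(c*t*(t-a)) by ring,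
    Real.exp_zero]

lemma piece1 (c t τ : ℝ) (hc : 0 < c) (hτ0 : 0 < τ) (hτt : τ ≤ t/2) :
    (∫ s in τ..(t/2), (1/Real.sqrt s) * Real.exp (-(c*(t^2 - s^2))))
      ≤ Real.exp (-(3/4*(c*t^2))) * (2*Real.sqrt (t/2)) := by
  have hmono : (∫ s in τ..(t/2), (1/Real.sqrt s) * Real.exp (-(c*(t^2-s^2))))
      ≤ ∫ s in τ..(t/2), Real.exp (-(3/4*(c*t^2))) * (1/Real.sqrt s) := by
    apply intervalIntegral.integral_mono_on hτt
    · exact integrable_aux τ (t/2) hτ0 hτt _ (by continuity)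
    · exact (integrable_invsqrt τ (t/2) hτ0 hτt).const_mul _
    · intro s hs
      have hs0 : 0 < s := lt_of_lt_of_le hτ0 hs.1
      have h2 : Real.exp (-(c*(t^2-s^2))) ≤ Real.exp (-(3/4*(c*t^2))) := by
        apply Real.exp_le_exp.2
        nlinarith [mul_nonneg (mul_nonneg hc.le (sub_nonneg.2 hs.2)) (by linarith [hs.1] : (0:ℝ) ≤ t/2 + s)]
      calc (1/Real.sqrt s) * Real.exp (-(c*(t^2-s^2)))
          ≤ (1/Real.sqrt s) * Real.exp (-(3/4*(c*t^2))) :=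
            mul_le_mul_of_nonneg_left h2 (by positivity)
        _ = Real.exp (-(3/4*(c*t^2))) * (1/Real.sqrt s) := mul_comm _ _
  refine hmono.trans ?_
  rw [intervalIntegral.integral_const_mul, sqrt_integral τ (t/2) hτ0 hτt]
  have : 0 ≤ Real.sqrt τ := Real.sqrt_nonneg τ
  nlinarith [Real.exp_pos (-(3/4*(c*t^2)))]

lemma final_ineq (c t v E1 E2 : ℝ) (hc : 0 < c) (hv : 0 < v) (ht2 : t = 2*v^2)
    (hkey : (c*t^2)*E1 + (1 - E2) ≤ 5/4) (hE1 : 0 ≤ E1) (hE2' : E2 ≤ 1) :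
    E1*(2*v) + (1/v)*((1-E2)/(c*t)) ≤ 2/(c*(t*(v*Real.sqrt 2))) := by
  subst ht2
  have hw : 0 < Real.sqrt 2 := by positivity
  have hw2 : (Real.sqrt 2)^2 = 2 := Real.sq_sqrt (by norm_num)
  have hw15 : Real.sqrt 2 ≤ 3/2 := by nlinarith
  rw [le_div_iff₀ (by positivity)]
  have expand : (E1*(2*v) + (1/v)*((1-E2)/(c*(2*v^2)))) * (c*((2*v^2)*(v*Real.sqrt 2)))
      = Real.sqrt 2 * ((c*(2*v^2)^2)*E1 + (1 - E2)) := by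
    field_simp
  rw [expand]
  have hS : 0 ≤ (c*(2*v^2)^2)*E1 + (1 - E2) := by
    have : 0 ≤ (c*(2*v^2)^2)*E1 := by positivity
    linarith
  nlinarith

/-- Estimate (5.68): `∫_τ^t s^{-1/2} e^{-a₀(t²-s²)/(4ε)} ds ≤ (8/a₀) ε t^{-3/2}`. -/
theorem stmt15 (a₀ ε τ t : ℝ) (ha : 0 < a₀) (hε : 0 < ε)
    (hτ : Real.sqrt ε ≤ τ) (ht : τ ≤ t) :
    (∫ s in τ..t, (1 / Real.sqrt s) * Real.exp (-a₀ * (t ^ 2 - s ^ 2) / (4 * ε)))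
      ≤ (8 / a₀) * ε / t ^ ((3:ℝ) / 2) := by
  have hτ0 : 0 < τ := lt_of_lt_of_le (Real.sqrt_pos.2 hε) hτ
  have ht0 : 0 < t := hτ0.trans_le ht
  set c := a₀ / (4*ε) with hc
  have hc0 : 0 < c := by positivity
  have hrw : ∀ s:ℝ, -a₀ * (t^2 - s^2) / (4*ε) = -(c*(t^2 - s^2)) := by
    intro s; rw [hc]; field_simp
  simp only [hrw]
  have hst : 0 < Real.sqrt t := Real.sqrt_pos.2 ht0
  have h32 : t ^ ((3:ℝ)/2) = t * Real.sqrt t := by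
    rw [show (3:ℝ)/2 = 1 + 1/2 by norm_num, Real.rpow_add ht0, Real.rpow_one,
      ← Real.sqrt_eq_rpow]
  have hRHS : (8/a₀) * ε / t ^ ((3:ℝ)/2) = 2/(c*(t*Real.sqrt t)) := by
    rw [h32, hc]
    field_simp
    ring
  rw [hRHS]
  by_cases hsplit : t ≤ 2*τ
  · -- single piece
    refine (piece2 c t τ hc0 hτ0 ht).trans ?_
    have hE1 : Real.exp (-(c*t*(t-τ))) ≤ 1 := by
      rw [← Real.exp_zero]
      apply Real.exp_le_exp.2
      nlinarith [mul_nonneg (mul_nonneg hc0.le ht0.le) (sub_nonneg.2 ht)]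
    have h1 : 1/Real.sqrt τ ≤ Real.sqrt 2 / Real.sqrt t := by
      rw [div_le_div_iff₀ (Real.sqrt_pos.2 hτ0) hst, one_mul]
      calc Real.sqrt t ≤ Real.sqrt (2*τ) := Real.sqrt_le_sqrt (by linarith)
        _ = Real.sqrt 2 * Real.sqrt τ := Real.sqrt_mul (by norm_num) τ
    have h2 : (1 - Real.exp (-(c*t*(t-τ))))/(c*t) ≤ 1/(c*t) := by
      gcongr
      linarith [Real.exp_pos (-(c*t*(t-τ)))]
    calc (1/Real.sqrt τ) * ((1 - Real.exp (-(c*t*(t-τ))))/(c*t))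
        ≤ (Real.sqrt 2 / Real.sqrt t) * (1/(c*t)) := by
          apply mul_le_mul h1 h2 (div_nonneg (by linarith [hE1]) (by positivity)) (by positivity)
      _ = Real.sqrt 2 / (c*(t*Real.sqrt t)) := by field_simp
      _ ≤ 2 / (c*(t*Real.sqrt t)) := by
          gcongr
          nlinarith [Real.sq_sqrt (show (0:ℝ) ≤ 2 by norm_num), Real.sqrt_nonneg 2]
  · -- two pieces
    push_neg at hsplit
    have hτt2 : τ ≤ t/2 := by linarith
    have ht2pos : 0 < t/2 := by linarith
    have hint1 : IntervalIntegrable (fun s => (1/Real.sqrt s) * Real.exp (-(c*(t^2 - s^2))))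
        volume τ (t/2) := integrable_aux τ (t/2) hτ0 hτt2 _ (by continuity)
    have hint2 : IntervalIntegrable (fun s => (1/Real.sqrt s) * Real.exp (-(c*(t^2 - s^2))))
        volume (t/2) t := integrable_aux (t/2) t ht2pos (by linarith) _ (by continuity)
    rw [← intervalIntegral.integral_add_adjacent_intervals hint1 hint2]
    set v := Real.sqrt (t/2) with hv
    have hv0 : 0 < v := Real.sqrt_pos.2 ht2pos
    have hv2 : t = 2*v^2 := by rw [hv, Real.sq_sqrt ht2pos.le]; ring
    have huv : Real.sqrt t = v * Real.sqrt 2 := by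
      rw [hv, ← Real.sqrt_mul ht2pos.le]
      ring_nf
    have hP1 := piece1 c t τ hc0 hτ0 hτt2
    have hP2 := piece2 c t (t/2) hc0 ht2pos (by linarith)
    rw [show c*t*(t-t/2) = c*t^2/2 by ring] at hP2
    have hkey := key_ineq (c*t^2) (by positivity)
    have hfin := final_ineq c t v (Real.exp (-(3/4*(c*t^2)))) (Real.exp (-(c*t^2/2)))
      hc0 hv0 hv2 ?_ (Real.exp_pos _).le ?_
    · calc (∫ s in τ..(t/2), (1/Real.sqrt s) * Real.exp (-(c*(t^2 - s^2))))
          + ∫ s in (t/2)..t, (1/Real.sqrt s) * Real.exp (-(c*(t^2 - s^2)))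
          ≤ Real.exp (-(3/4*(c*t^2))) * (2*v)
            + (1/v)*((1 - Real.exp (-(c*t^2/2)))/(c*t)) := add_le_add hP1 hP2
        _ ≤ 2/(c*(t*(v*Real.sqrt 2))) := hfin
        _ = 2/(c*(t*Real.sqrt t)) := by rw [huv]
    · calc (c*t^2) * Real.exp (-(3/4*(c*t^2))) + (1 - Real.exp (-(c*t^2/2)))
          = (c*t^2) * Real.exp (-(3/4*(c*t^2))) + (1 - Real.exp (-((c*t^2)/2))) := by norm_num
        _ ≤ 5/4 := hkey
    · rw [← Real.exp_zero]
      apply Real.exp_le_exp.2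
      have : 0 < c*t^2 := by positivity
      linarith
end

section
/- Let f : ℝ × [t₀, T] → ℝ be continuous, locally Lipschitz in x, odd in x (f(−x,t) = −f(x,t)), and suppose f(x,t)/x ≥ a₀(t) for all 0 < x ≤ x̃(t) and t ∈ [t₀, T], where a₀ is continuous and x̃ is a positive continuous function. Let x_s solve the (random or deterministic) integral equation x_s = x₀ + (1/ε)∫_{t₀}^s f(x_u, u) du + noise-term N_s, and let x⁰_s solve x⁰_s = x₀ + (1/ε)∫_{t₀}^s a₀(u) x⁰_u du + N_s with the same inhomogeneity N_s (pathwise, N continuous, N_{t₀} = 0). If 0 < x_s < x̃(s) for all s ∈ [t₀, t], then x_s ≥ x⁰_s for all s ∈ [t₀, t]. -/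
open Real MeasureTheory

/-- Pathwise comparison underlying Lemma 4.5: if `f(x,u) ≥ a₀(u) x` for
`0 < x ≤ x̃(u)`, and `x`, `x⁰` solve the integral equations with the same
inhomogeneity `N`, then `x_s ≥ x⁰_s` as long as `0 < x_s < x̃(s)`. -/
theorem stmt17 (t₀ T t ε : ℝ) (ht₀ : t₀ ≤ t) (htT : t ≤ T) (hε : 0 < ε)
    (f : ℝ → ℝ → ℝ) (a₀ xtil : ℝ → ℝ) (x x0 N : ℝ → ℝ) (xinit : ℝ)
    (hfc : Continuous fun p : ℝ × ℝ => f p.1 p.2)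
    (hflip : ∀ s : ℝ, LocallyLipschitz fun y => f y s)
    (hodd : ∀ (y s : ℝ), f (-y) s = -f y s)
    (ha₀ : ContinuousOn a₀ (Set.Icc t₀ T))
    (hxtilc : ContinuousOn xtil (Set.Icc t₀ T))
    (hxtilpos : ∀ s ∈ Set.Icc t₀ T, 0 < xtil s)
    (hcomp : ∀ s ∈ Set.Icc t₀ T, ∀ y : ℝ, 0 < y → y ≤ xtil s → a₀ s * y ≤ f y s)
    (hN : Continuous N) (hN0 : N t₀ = 0)
    (hxc : Continuous x) (hx0c : Continuous x0)
    (hx : ∀ s ∈ Set.Icc t₀ t,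
      x s = xinit + (1 / ε) * (∫ u in t₀..s, f (x u) u) + N s)
    (hx0 : ∀ s ∈ Set.Icc t₀ t,
      x0 s = xinit + (1 / ε) * (∫ u in t₀..s, a₀ u * x0 u) + N s)
    (hin : ∀ s ∈ Set.Icc t₀ t, 0 < x s ∧ x s < xtil s) :
    ∀ s ∈ Set.Icc t₀ t, x0 s ≤ x s := by
  have htT' : t₀ ≤ T := ht₀.trans htT
  -- continuous extension `b` of `a₀`
  set proj : ℝ → ℝ := fun u => max t₀ (min u T) with hproj
  have hprojc : Continuous proj := continuous_const.max (continuous_id.min continuous_const)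
  have hprojmem : ∀ u, proj u ∈ Set.Icc t₀ T := fun u =>
    ⟨le_max_left _ _, max_le htT' (min_le_right _ _)⟩
  set b : ℝ → ℝ := fun u => a₀ (proj u) with hbdef
  have hb : Continuous b := ha₀.comp_continuous hprojc hprojmem
  have hbeq : ∀ u ∈ Set.Icc t₀ T, b u = a₀ u := by
    intro u hu
    simp only [hbdef, hproj]
    rw [min_eq_left hu.2, max_eq_right hu.1]
  have hfx : Continuous fun u => f (x u) u :=
    hfc.comp (hxc.prodMk continuous_id)
  set G : ℝ → ℝ := fun u => f (x u) u - b u * x0 u with hGdef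
  have hG : Continuous G := hfx.sub (hb.mul hx0c)
  set Z : ℝ → ℝ := fun s => ∫ u in t₀..s, G u with hZdef
  set A : ℝ → ℝ := fun s => ∫ u in t₀..s, b u with hAdef
  -- formula for the difference
  have hzeq : ∀ s ∈ Set.Icc t₀ t, x s - x0 s = ε⁻¹ * Z s := by
    intro s hs
    have hsub : Set.Icc t₀ s ⊆ Set.Icc t₀ T := Set.Icc_subset_Icc le_rfl (hs.2.trans htT)
    have hcongr : (∫ u in t₀..s, a₀ u * x0 u) = ∫ u in t₀..s, b u * x0 u := by
      apply intervalIntegral.integral_congr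
      intro u hu
      rw [Set.uIcc_of_le hs.1] at hu
      simp only
      rw [hbeq u (hsub hu)]
    have hint1 : IntervalIntegrable (fun u => f (x u) u) volume t₀ s :=
      hfx.intervalIntegrable _ _
    have hint2 : IntervalIntegrable (fun u => b u * x0 u) volume t₀ s :=
      (hb.mul hx0c).intervalIntegrable _ _
    rw [hx s hs, hx0 s hs, hcongr, hZdef]
    simp only [hGdef]
    rw [intervalIntegral.integral_sub hint1 hint2]
    ring
  -- derivatives
  have hZd : ∀ s, HasDerivAt Z (G s) s := fun s =>
    intervalIntegral.integral_hasDerivAt_right (hG.intervalIntegrable _ _)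
      (hG.stronglyMeasurableAtFilter _ _) hG.continuousAt
  have hAd : ∀ s, HasDerivAt A (b s) s := fun s =>
    intervalIntegral.integral_hasDerivAt_right (hb.intervalIntegrable _ _)
      (hb.stronglyMeasurableAtFilter _ _) hb.continuousAt
  set Φ : ℝ → ℝ := fun s => Z s * Real.exp (-(ε⁻¹ * A s)) with hΦdef
  have hΦd : ∀ s, HasDerivAt Φ
      ((G s - ε⁻¹ * b s * Z s) * Real.exp (-(ε⁻¹ * A s))) s := by
    intro s
    have h1 : HasDerivAt (fun s => Real.exp (-(ε⁻¹ * A s)))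
        (Real.exp (-(ε⁻¹ * A s)) * (-(ε⁻¹ * b s))) s :=
      (((hAd s).const_mul ε⁻¹).neg).exp
    have h2 := (hZd s).mul h1
    convert h2 using 1
    · rfl
    · rfl
    · rfl
    · ring
  have hΦdiff : Differentiable ℝ Φ := fun s => (hΦd s).differentiableAt
  have hΦc : Continuous Φ := hΦdiff.continuous
  have hmono : MonotoneOn Φ (Set.Icc t₀ t) := by
    apply monotoneOn_of_deriv_nonneg (convex_Icc _ _) hΦc.continuousOn
      (fun s _ => (hΦdiff s).differentiableWithinAt)
    intro s hs
    rw [interior_Icc] at hs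
    rw [(hΦd s).deriv]
    have hsIcc : s ∈ Set.Icc t₀ t := ⟨hs.1.le, hs.2.le⟩
    have hsT : s ∈ Set.Icc t₀ T := ⟨hs.1.le, hs.2.le.trans htT⟩
    obtain ⟨hxpos, hxlt⟩ := hin s hsIcc
    have hfge : a₀ s * x s ≤ f (x s) s := hcomp s hsT (x s) hxpos hxlt.le
    have hx0eq : x0 s = x s - ε⁻¹ * Z s := by
      have := hzeq s hsIcc; linarith
    have hbe : b s = a₀ s := hbeq s hsT
    apply mul_nonneg _ (Real.exp_pos _).le
    simp only [hGdef]
    rw [hx0eq, hbe]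
    have : f (x s) s - a₀ s * (x s - ε⁻¹ * Z s) - ε⁻¹ * a₀ s * Z s
        = f (x s) s - a₀ s * x s := by ring
    linarith
  intro s hs
  have hΦ0 : Φ t₀ = 0 := by
    simp [hΦdef, hZdef, intervalIntegral.integral_same]
  have h := hmono (Set.left_mem_Icc.mpr ht₀) hs hs.1
  rw [hΦ0] at h
  have hZnn : 0 ≤ Z s := by
    by_contra hneg
    push_neg at hneg
    have h' : 0 ≤ Z s * Real.exp (-(ε⁻¹ * A s)) := h
    nlinarith [Real.exp_pos (-(ε⁻¹ * A s))]
  have hz := hzeq s hs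
  nlinarith [mul_nonneg (inv_pos.mpr hε).le hZnn]
end
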